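/- arXiv:math/0402328 — 5 statements merged into one kernel-verified Lean document; each statement's English description precedes it below -/
import Mathlib

section
/- Let n ≥ 1 and let P ⊆ ℝ^n be a full-dimensional lattice polytope. Suppose k ≥ 0 is an integer such that the dilate kP contains no lattice point in its interior. Then for every integer ℓ with ℓ ≥ max{n − k, 1}, the dilated polytope ℓP is normal; that is, for every integer m ≥ 1, every lattice point of m(ℓP) is a sum of m lattice points of ℓP. (This is the paper's Corollary 1.4, with the hypothesis 'k ≤ d(P)' unwound: d(P) is the largest integer d such that dP has no lattice points in its relative interior.) -/
open Pointwise

/-- The set of lattice points of `ℝ^n`, i.e. points with all coordinates integral. -/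
def latticePts (n : ℕ) : Set (Fin n → ℝ) := {x | ∀ i, ∃ z : ℤ, x i = (z : ℝ)}

namespace DilateNormalAux

variable {n : ℕ}

lemma lat_add {x y : Fin n → ℝ} (hx : x ∈ latticePts n) (hy : y ∈ latticePts n) :
    x + y ∈ latticePts n := by
  intro i
  obtain ⟨a, ha⟩ := hx i
  obtain ⟨b, hb⟩ := hy i
  exact ⟨a + b, by rw [Pi.add_apply, ha, hb]; push_cast; ring⟩

lemma lat_sub {x y : Fin n → ℝ} (hx : x ∈ latticePts n) (hy : y ∈ latticePts n) :
    x - y ∈ latticePts n := by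
  intro i
  obtain ⟨a, ha⟩ := hx i
  obtain ⟨b, hb⟩ := hy i
  exact ⟨a - b, by rw [Pi.sub_apply, ha, hb]; push_cast; ring⟩

lemma lat_zsum {ι : Type*} [Fintype ι] (v : ι → (Fin n → ℝ))
    (hv : ∀ i, v i ∈ latticePts n) (a : ι → ℤ) :
    (∑ i, (a i : ℝ) • v i) ∈ latticePts n := by
  intro j
  choose zf hzf using fun i => hv i j
  refine ⟨∑ i, a i * zf i, ?_⟩
  rw [Finset.sum_apply]
  push_cast
  refine Finset.sum_congr rfl fun i _ => ?_
  rw [Pi.smul_apply, smul_eq_mul, hzf i]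

lemma lat_zsmul {x : Fin n → ℝ} (hx : x ∈ latticePts n) (a : ℤ) :
    (a : ℝ) • x ∈ latticePts n := by
  have := lat_zsum (fun _ : Fin 1 => x) (fun _ => hx) (fun _ => a)
  simpa using this

lemma sum_weights_mem {S : Finset (Fin n → ℝ)} {P : Set (Fin n → ℝ)}
    (hP : P = convexHull ℝ (S : Set (Fin n → ℝ))) (hPne : P.Nonempty)
    {ι : Type*} [Fintype ι] (v : ι → (Fin n → ℝ)) (hv : ∀ i, v i ∈ P)
    (g : ι → ℝ) (hg : ∀ i, 0 ≤ g i) :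
    (∑ i, g i • v i) ∈ (∑ i, g i) • P := by
  have hPc : Convex ℝ P := hP ▸ convex_convexHull ℝ _
  rcases eq_or_lt_of_le (Finset.sum_nonneg fun i _ => hg i) with h0 | hpos
  · have hz : ∀ i ∈ Finset.univ, g i = 0 :=
      (Finset.sum_eq_zero_iff_of_nonneg (fun i _ => hg i)).mp h0.symm
    have hs : (∑ i, g i • v i) = 0 := Finset.sum_eq_zero fun i hi => by
      rw [hz i hi, zero_smul]
    rw [← h0, Set.zero_smul_set hPne, hs]
    exact Set.mem_zero.mpr rfl
  · have hmem : Finset.univ.centerMass g v ∈ convexHull ℝ P :=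
      Finset.centerMass_mem_convexHull _ (fun i _ => hg i) hpos (fun i _ => hv i)
    rw [hPc.convexHull_eq] at hmem
    have hrw : (∑ i, g i • v i) = (∑ i, g i) • Finset.univ.centerMass g v := by
      rw [Finset.centerMass, smul_smul, mul_inv_cancel₀ (ne_of_gt hpos), one_smul]
    rw [hrw]
    exact Set.smul_mem_smul_set hmem

lemma interior_add_subset' {A B : Set (Fin n → ℝ)} :
    interior A + B ⊆ interior (A + B) :=
  interior_maximal (Set.add_subset_add_right interior_subset) isOpen_interior.add_right

lemma pick_sub {ι : Type*} [Fintype ι] [DecidableEq ι] (c : ι → ℕ) :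
    ∀ t, t ≤ ∑ i, c i → ∃ d : ι → ℕ, (∀ i, d i ≤ c i) ∧ ∑ i, d i = t := by
  intro t
  induction t with
  | zero => exact fun _ => ⟨0, fun i => Nat.zero_le _, by simp⟩
  | succ t ih =>
    intro ht
    obtain ⟨d, hd, hds⟩ := ih (le_trans (Nat.le_succ t) ht)
    have hex : ∃ i, d i < c i := by
      by_contra h
      push_neg at h
      have : ∑ i, c i ≤ ∑ i, d i := Finset.sum_le_sum fun i _ => h i
      omega
    obtain ⟨i0, hi0⟩ := hex
    refine ⟨Function.update d i0 (d i0 + 1), ?_, ?_⟩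
    · intro i
      rcases eq_or_ne i i0 with rfl | hne
      · rw [Function.update_self]; omega
      · rw [Function.update_of_ne hne]; exact hd i
    · rw [Finset.sum_update_of_mem (Finset.mem_univ i0)]
      have h2 : ∑ i, d i = d i0 + ∑ i ∈ Finset.univ \ {i0}, d i := by
        rw [← Finset.sum_eq_add_sum_sdiff_singleton_of_mem (Finset.mem_univ i0)]
      omega

lemma extend_affine {E : Type*} [AddCommGroup E] [Module ℝ E]
    {S : Set E} (hspan : affineSpan ℝ S = ⊤)
    {s : Set E} (hsS : s ⊆ S) (hne : s.Nonempty)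
    (hind : AffineIndependent ℝ ((↑) : s → E)) :
    ∃ u : Set E, s ⊆ u ∧ u ⊆ S ∧ AffineIndependent ℝ ((↑) : u → E) ∧
      affineSpan ℝ u = ⊤ := by
  obtain ⟨p₁, hp₁⟩ := hne
  rw [affineIndependent_set_iff_linearIndependent_vsub ℝ hp₁] at hind
  have hsub : (fun p => (p -ᵥ p₁ : E)) '' (s \ {p₁}) ⊆
      (fun p => (p -ᵥ p₁ : E)) '' (S \ {p₁}) :=
    Set.image_mono (Set.diff_subset_diff_left hsS)
  obtain ⟨b, hbT, hsb, hTb, hli⟩ := exists_linearIndepOn_id_extension hind hsub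
  replace hli : LinearIndependent ℝ (fun v => v : b → E) := hli
  have hspanT : Submodule.span ℝ ((fun p => (p -ᵥ p₁ : E)) '' (S \ {p₁})) = ⊤ := by
    rw [← vectorSpan_eq_span_vsub_set_right_ne ℝ (hsS hp₁), ← direction_affineSpan, hspan]
    exact AffineSubspace.direction_top ℝ E E
  have hspanb : Submodule.span ℝ b = ⊤ := by
    have h1 : Submodule.span ℝ ((fun p => (p -ᵥ p₁ : E)) '' (S \ {p₁})) ≤
        Submodule.span ℝ b := Submodule.span_le.mpr hTb
    rw [hspanT] at h1
    exact top_le_iff.mp h1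
  have h0 : ∀ v ∈ b, v ≠ (0 : E) := fun v hv => hli.ne_zero (⟨v, hv⟩ : b)
  rw [linearIndependent_set_iff_affineIndependent_vadd_union_singleton ℝ h0 p₁] at hli
  have hspanb' : Submodule.span ℝ (Set.range ((↑) : b → E)) = ⊤ := by
    rwa [Subtype.range_coe]
  refine ⟨{p₁} ∪ (fun v => v +ᵥ p₁) '' b, ?_, ?_, hli,
    affineSpan_singleton_union_vadd_eq_top_of_span_eq_top p₁ hspanb'⟩
  · intro q hq
    rcases eq_or_ne q p₁ with rfl | hqp
    · exact Set.mem_union_left _ rfl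
    · refine Set.mem_union_right _ ⟨q -ᵥ p₁, hsb ⟨q, ⟨hq, hqp⟩, rfl⟩, ?_⟩
      simp
  · rintro q (rfl | ⟨v, hv, rfl⟩)
    · exact hsS hp₁
    · obtain ⟨w, ⟨hwS, -⟩, rfl⟩ := hbT hv
      simpa using hwS

end DilateNormalAux

open DilateNormalAux

lemma dilate_key (n : ℕ)
    (S : Finset (Fin n → ℝ)) (hS : S.Nonempty)
    (hSlat : (S : Set (Fin n → ℝ)) ⊆ latticePts n)
    (P : Set (Fin n → ℝ)) (hP : P = convexHull ℝ (S : Set (Fin n → ℝ)))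
    (hPfull : (interior P).Nonempty)
    (k : ℕ)
    (hk : ∀ x ∈ interior ((k : ℝ) • P), x ∉ latticePts n)
    (ℓ : ℕ) (hℓ : max (n - k) 1 ≤ ℓ)
    (M : ℕ) (hM : ℓ ≤ M)
    (x : Fin n → ℝ) (hx1 : x ∈ (M : ℝ) • P) (hx2 : x ∈ latticePts n) :
    ∃ y z : Fin n → ℝ, y ∈ ((ℓ : ℝ) • P) ∩ latticePts n ∧
      z ∈ (((M - ℓ : ℕ) : ℝ) • P) ∩ latticePts n ∧ x = y + z := by
  classical
  have hℓ1 : 1 ≤ ℓ := le_trans (le_max_right _ 1) hℓ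
  have hconv : Convex ℝ P := hP ▸ convex_convexHull ℝ _
  obtain ⟨w0, hw0⟩ := hS
  have hw0P : w0 ∈ P := hP ▸ subset_convexHull ℝ _ (Finset.mem_coe.mpr hw0)
  have hPne : P.Nonempty := ⟨w0, hw0P⟩
  have hspanS : affineSpan ℝ (S : Set (Fin n → ℝ)) = ⊤ :=
    affineSpan_eq_top_of_nonempty_interior (by rwa [hP] at hPfull)
  obtain ⟨p, hpP, hxp⟩ := hx1
  have hpc : p ∈ convexHull ℝ (S : Set (Fin n → ℝ)) := hP ▸ hpP
  obtain ⟨ι₀, hft, z, w, hzS, hzind, hwpos, hwsum, hwcomb⟩ :=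
    eq_pos_convex_span_of_mem_convexHull hpc
  have hι₀ : Nonempty ι₀ := by
    by_contra h
    rw [not_nonempty_iff] at h
    rw [Finset.univ_eq_empty, Finset.sum_empty] at hwsum
    norm_num at hwsum
  obtain ⟨u, hsu, huS, huind, huspan⟩ :=
    extend_affine hspanS hzS ⟨z (Classical.arbitrary ι₀), Set.mem_range_self _⟩ hzind.range
  haveI : Fintype ↑u := (finite_set_of_fin_dim_affineIndependent ℝ huind).fintype
  have hcardu : Fintype.card ↑u = n + 1 := by
    have h1 := (huind.affineSpan_eq_top_iff_card_eq_finrank_add_one).mp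
      (by rwa [Subtype.range_coe])
    rw [h1, Module.finrank_fin_fun]
  have hzu : ∀ i, z i ∈ u := fun i => hsu (Set.mem_range_self i)
  have huP : ∀ v : ↑u, (v : Fin n → ℝ) ∈ P := fun v =>
    hP ▸ subset_convexHull ℝ _ (huS v.2)
  have hulat : ∀ v : ↑u, (v : Fin n → ℝ) ∈ latticePts n := fun v => hSlat (huS v.2)
  -- weights on u
  set W : ↑u → ℝ := fun v => ∑ i, if z i = (v : Fin n → ℝ) then w i else 0 with hWdef
  have hW0 : ∀ v, 0 ≤ W v := fun v =>
    Finset.sum_nonneg fun i _ => by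
      by_cases h : z i = (v : Fin n → ℝ) <;> simp [h, (hwpos i).le]
  have hWsum : ∑ v, W v = 1 := by
    rw [hWdef, Finset.sum_comm]
    rw [← hwsum]
    refine Finset.sum_congr rfl fun i _ => ?_
    rw [Finset.sum_eq_single (⟨z i, hzu i⟩ : ↑u)]
    · simp
    · intro v _ hv
      rw [if_neg]
      intro h
      exact hv (Subtype.ext h.symm)
    · intro h
      exact absurd (Finset.mem_univ _) h
  have hWcomb : ∑ v, W v • (v : Fin n → ℝ) = p := by
    rw [hWdef]
    have h1 : ∀ v : ↑u, (∑ i, if z i = (v : Fin n → ℝ) then w i else 0) • (v : Fin n → ℝ)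
        = ∑ i, (if z i = (v : Fin n → ℝ) then w i else 0) • (v : Fin n → ℝ) := fun v =>
      Finset.sum_smul
    simp_rw [h1]
    rw [Finset.sum_comm]
    rw [← hwcomb]
    refine Finset.sum_congr rfl fun i _ => ?_
    rw [Finset.sum_eq_single (⟨z i, hzu i⟩ : ↑u)]
    · simp
    · intro v _ hv
      rw [if_neg, zero_smul]
      intro h
      exact hv (Subtype.ext h.symm)
    · intro h
      exact absurd (Finset.mem_univ _) h
  set lam : ↑u → ℝ := fun v => (M : ℝ) * W v with hlamdef
  have hlam0 : ∀ v, 0 ≤ lam v := fun v => mul_nonneg (Nat.cast_nonneg _) (hW0 v)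
  have hlamsum : ∑ v, lam v = (M : ℝ) := by
    rw [hlamdef, ← Finset.mul_sum, hWsum, mul_one]
  have hxcomb : x = ∑ v, lam v • (v : Fin n → ℝ) := by
    rw [← hxp, ← hWcomb]
    show (M : ℝ) • (∑ v, W v • (v : Fin n → ℝ)) = _
    rw [Finset.smul_sum]
    exact Finset.sum_congr rfl fun v _ => by rw [smul_smul]
  set c : ↑u → ℕ := fun v => ⌊lam v⌋₊ with hcdef
  set f : ↑u → ℝ := fun v => lam v - (c v : ℝ) with hfdef
  have hf0 : ∀ v, 0 ≤ f v := fun v => sub_nonneg.mpr (Nat.floor_le (hlam0 v))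
  have hf1 : ∀ v, f v < 1 := fun v => by
    have := Nat.lt_floor_add_one (lam v)
    simp only [hfdef]
    linarith
  have hcs_le : ∑ v, c v ≤ M := by
    have h1 : ((∑ v, c v : ℕ) : ℝ) ≤ (M : ℝ) := by
      push_cast
      rw [← hlamsum]
      exact Finset.sum_le_sum fun v _ => Nat.floor_le (hlam0 v)
    exact_mod_cast h1
  set R : ℕ := M - ∑ v, c v with hRdef
  have hcsum : ∑ v, c v = M - R := by omega
  have hRcast : (R : ℝ) = ∑ v, f v := by
    have h1 : (R : ℝ) = (M : ℝ) - ((∑ v, c v : ℕ) : ℝ) := by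
      rw [hRdef]
      push_cast [Nat.cast_sub hcs_le]
      ring
    rw [h1, ← hlamsum]
    push_cast
    rw [← Finset.sum_sub_distrib]
  set q : Fin n → ℝ := x - ∑ v, (c v : ℝ) • (v : Fin n → ℝ) with hqdef
  have hqf : q = ∑ v, f v • (v : Fin n → ℝ) := by
    rw [hqdef, hxcomb, ← Finset.sum_sub_distrib]
    exact Finset.sum_congr rfl fun v _ => by rw [hfdef, sub_smul]
  have hqlat : q ∈ latticePts n := by
    have h1 := lat_zsum (fun v : ↑u => (v : Fin n → ℝ)) hulat (fun v => (c v : ℤ))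
    simp only [Int.cast_natCast] at h1
    exact lat_sub hx2 h1
  have hqmem : q ∈ (R : ℝ) • P := by
    rw [hqf, hRcast]
    exact sum_weights_mem hP hPne _ huP f hf0
  -- the complementary box point argument
  have hRk : R + k ≤ n := by
    by_contra hcon
    push_neg at hcon
    have hRn : R ≤ n := by
      have huNe : (Finset.univ : Finset ↑u).Nonempty := by
        rw [← Finset.card_pos, Finset.card_univ, hcardu]
        omega
      have h1 : (R : ℝ) < (n : ℝ) + 1 := by
        rw [hRcast]
        calc ∑ v, f v < ∑ _v : ↑u, (1 : ℝ) :=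
              Finset.sum_lt_sum_of_nonempty huNe fun v _ => hf1 v
          _ = (Fintype.card ↑u : ℝ) := by simp
          _ = (n : ℝ) + 1 := by rw [hcardu]; push_cast; ring
      have h2 : R < n + 1 := by exact_mod_cast h1
      omega
    set h : ℕ := n + 1 - R with hhdef
    have hh1 : 1 ≤ h := by omega
    have hhk : h ≤ k := by omega
    have hhcast : (h : ℝ) = (n : ℝ) + 1 - (R : ℝ) := by
      rw [hhdef]
      push_cast [Nat.cast_sub (by omega : R ≤ n + 1)]
      ring
    have hh0 : (h : ℝ) ≠ 0 := by
      have : (0 : ℝ) < (h : ℝ) := by exact_mod_cast hh1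
      linarith
    set g : ↑u → ℝ := fun v => 1 - f v with hgdef
    have hg0 : ∀ v, 0 < g v := fun v => by
      rw [hgdef]
      simp only
      linarith [hf1 v]
    have hgsum : ∑ v, g v = (h : ℝ) := by
      have hone : ∑ _v : ↑u, (1 : ℝ) = (n : ℝ) + 1 := by
        rw [Finset.sum_const, Finset.card_univ, hcardu, nsmul_eq_mul, mul_one]
        push_cast
        ring
      rw [hgdef, Finset.sum_sub_distrib, hone, ← hRcast, hhcast]
    set qbar : Fin n → ℝ := ∑ v, g v • (v : Fin n → ℝ) with hqbardef
    have hqbarlat : qbar ∈ latticePts n := by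
      have h1 : qbar = (∑ v : ↑u, (v : Fin n → ℝ)) - q := by
        rw [hqbardef, hqf, ← Finset.sum_sub_distrib]
        refine Finset.sum_congr rfl fun v _ => ?_
        rw [hgdef, sub_smul, one_smul]
      have h2 : (∑ v : ↑u, (v : Fin n → ℝ)) ∈ latticePts n := by
        have := lat_zsum (fun v : ↑u => (v : Fin n → ℝ)) hulat (fun _ => (1 : ℤ))
        simpa using this
      rw [h1]
      exact lat_sub h2 hqlat
    set b : AffineBasis ↑u ℝ (Fin n → ℝ) :=
      ⟨(↑), huind, by rwa [Subtype.range_coe]⟩ with hbdef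
    have hbcoe : ⇑b = ((↑) : ↑u → (Fin n → ℝ)) := rfl
    set μ : ↑u → ℝ := fun v => g v / (h : ℝ) with hμdef
    have hμsum : ∑ v, μ v = 1 := by
      rw [hμdef, ← Finset.sum_div, hgsum, div_self hh0]
    set ybar : Fin n → ℝ := ∑ v, μ v • (v : Fin n → ℝ) with hybardef
    have hybar_aff : ybar = Finset.univ.affineCombination ℝ ⇑b μ := by
      rw [Finset.affineCombination_eq_linear_combination _ _ _ hμsum, hybardef, hbcoe]
    have hcoord : ∀ v, b.coord v ybar = μ v := by
      intro v
      rw [hybar_aff]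
      exact AffineBasis.coord_apply_combination_of_mem b (Finset.mem_univ v) hμsum
    have hybar_int : ybar ∈ interior P := by
      have h1 : ybar ∈ interior (convexHull ℝ (Set.range ⇑b)) := by
        rw [AffineBasis.interior_convexHull]
        intro v
        rw [hcoord v, hμdef]
        have hhpos : (0 : ℝ) < (h : ℝ) := by exact_mod_cast hh1
        exact div_pos (hg0 v) hhpos
      have h2 : convexHull ℝ (Set.range ⇑b) ⊆ P := by
        rw [hbcoe, Subtype.range_coe, hP]
        exact convexHull_mono huS
      exact interior_mono h2 h1
    have hqbar_eq : qbar = (h : ℝ) • ybar := by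
      rw [hybardef, Finset.smul_sum, hqbardef]
      refine Finset.sum_congr rfl fun v _ => ?_
      rw [smul_smul, hμdef, mul_div_cancel₀ _ hh0]
    have hqbar_int : qbar ∈ interior ((h : ℝ) • P) := by
      rw [interior_smul₀ hh0, hqbar_eq]
      exact Set.smul_mem_smul_set hybar_int
    set t : ℕ := k - h with htdef
    have htcast : (h : ℝ) + (t : ℝ) = (k : ℝ) := by
      rw [htdef]
      push_cast [Nat.cast_sub hhk]
      ring
    have hξmem : qbar + (t : ℝ) • w0 ∈ interior ((k : ℝ) • P) := by
      have hmem : qbar + (t : ℝ) • w0 ∈ interior ((h : ℝ) • P) + (t : ℝ) • P :=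
        Set.add_mem_add hqbar_int (Set.smul_mem_smul_set hw0P)
      have hsub : interior ((h : ℝ) • P) + (t : ℝ) • P ⊆
          interior ((h : ℝ) • P + (t : ℝ) • P) := interior_add_subset'
      have heq : (h : ℝ) • P + (t : ℝ) • P = (k : ℝ) • P := by
        rw [← hconv.add_smul (Nat.cast_nonneg _) (Nat.cast_nonneg _), htcast]
      rw [← heq]
      exact hsub hmem
    have hξlat : qbar + (t : ℝ) • w0 ∈ latticePts n := by
      refine lat_add hqbarlat ?_
      have := lat_zsmul (hSlat (Finset.mem_coe.mpr hw0)) (t : ℤ)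
      simpa using this
    exact hk _ hξmem hξlat
  have hRℓ : R ≤ ℓ := by
    have := le_trans (le_max_left (n - k) 1) hℓ
    omega
  obtain ⟨d, hdc, hdsum⟩ := pick_sub c (ℓ - R) (by omega)
  have hRM : R ≤ M := by omega
  set y : Fin n → ℝ := q + ∑ v, (d v : ℝ) • (v : Fin n → ℝ) with hydef
  set zz : Fin n → ℝ := ∑ v, ((c v : ℝ) - (d v : ℝ)) • (v : Fin n → ℝ) with hzzdef
  have hy_mem : y ∈ (ℓ : ℝ) • P := by
    have h1 : (∑ v, (d v : ℝ) • (v : Fin n → ℝ)) ∈ (∑ v, (d v : ℝ)) • P :=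
      sum_weights_mem hP hPne _ huP _ fun v => Nat.cast_nonneg _
    have h2 : ∑ v, (d v : ℝ) = ((ℓ - R : ℕ) : ℝ) := by
      rw [← hdsum]
      push_cast
      rfl
    rw [h2] at h1
    have hadd := Set.add_mem_add hqmem h1
    rw [← hconv.add_smul (Nat.cast_nonneg _) (Nat.cast_nonneg _)] at hadd
    have h3 : (R : ℝ) + ((ℓ - R : ℕ) : ℝ) = (ℓ : ℝ) := by
      push_cast [Nat.cast_sub hRℓ]
      ring
    rw [h3] at hadd
    exact hadd
  have hy_lat : y ∈ latticePts n := by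
    refine lat_add hqlat ?_
    have := lat_zsum (fun v : ↑u => (v : Fin n → ℝ)) hulat (fun v => (d v : ℤ))
    simpa using this
  have hz_mem : zz ∈ ((M - ℓ : ℕ) : ℝ) • P := by
    have h1 : zz ∈ (∑ v, ((c v : ℝ) - (d v : ℝ))) • P :=
      sum_weights_mem hP hPne _ huP _ fun v => sub_nonneg.mpr (by exact_mod_cast hdc v)
    have h2 : ∑ v, ((c v : ℝ) - (d v : ℝ)) = ((M - ℓ : ℕ) : ℝ) := by
      rw [Finset.sum_sub_distrib]
      have e1 : ∑ v, (c v : ℝ) = ((M - R : ℕ) : ℝ) := by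
        rw [← hcsum]; push_cast; rfl
      have e2 : ∑ v, (d v : ℝ) = ((ℓ - R : ℕ) : ℝ) := by
        rw [← hdsum]; push_cast; rfl
      rw [e1, e2]
      push_cast [Nat.cast_sub hRM, Nat.cast_sub hRℓ, Nat.cast_sub hM]
      ring
    rwa [h2] at h1
  have hz_lat : zz ∈ latticePts n := by
    have := lat_zsum (fun v : ↑u => (v : Fin n → ℝ)) hulat (fun v => (c v : ℤ) - (d v : ℤ))
    simp only [Int.cast_sub, Int.cast_natCast] at this
    rwa [hzzdef]
  have hxyz : x = y + zz := by
    have h1 : zz = (∑ v, (c v : ℝ) • (v : Fin n → ℝ)) -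
        ∑ v, (d v : ℝ) • (v : Fin n → ℝ) := by
      rw [hzzdef, ← Finset.sum_sub_distrib]
      exact Finset.sum_congr rfl fun v _ => by rw [sub_smul]
    rw [hydef, h1, hqdef]
    abel
  exact ⟨y, zz, ⟨hy_mem, hy_lat⟩, ⟨hz_mem, hz_lat⟩, hxyz⟩

/-- **Corollary 1.4.** Let `P ⊆ ℝ^n` (`n ≥ 1`) be a full-dimensional lattice polytope and
`k ≥ 0` an integer such that `kP` contains no lattice point in its interior. Then for every
integer `ℓ ≥ max {n - k, 1}`, the dilate `ℓP` is normal: for every `m ≥ 1`, every lattice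
point of `m(ℓP)` is a sum of `m` lattice points of `ℓP`. -/
theorem dilate_is_normal
    (n : ℕ) (hn : 1 ≤ n)
    (S : Finset (Fin n → ℝ)) (hS : S.Nonempty)
    (hSlat : (S : Set (Fin n → ℝ)) ⊆ latticePts n)
    (P : Set (Fin n → ℝ)) (hP : P = convexHull ℝ (S : Set (Fin n → ℝ)))
    (hPfull : (interior P).Nonempty)
    (k : ℕ)
    (hk : ∀ x ∈ interior ((k : ℝ) • P), x ∉ latticePts n)
    (ℓ : ℕ) (hℓ : max (n - k) 1 ≤ ℓ) :
    ∀ m : ℕ, 1 ≤ m →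
      ∀ x ∈ ((m : ℝ) • ((ℓ : ℝ) • P)) ∩ latticePts n,
        ∃ f : Fin m → (Fin n → ℝ),
          (∀ i, f i ∈ ((ℓ : ℝ) • P) ∩ latticePts n) ∧ x = ∑ i, f i := by
  intro m
  induction m with
  | zero => omega
  | succ m ih =>
    intro _ x hx
    obtain ⟨hx1, hx2⟩ := hx
    rcases Nat.eq_zero_or_pos m with rfl | hm
    · refine ⟨fun _ => x, fun i => ⟨?_, hx2⟩, by simp⟩
      have : ((0 + 1 : ℕ) : ℝ) • ((ℓ : ℝ) • P) = (ℓ : ℝ) • P := by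
        norm_num
      rwa [this] at hx1
    · have hx1' : x ∈ (((m + 1) * ℓ : ℕ) : ℝ) • P := by
        have : (((m + 1) * ℓ : ℕ) : ℝ) • P = ((m + 1 : ℕ) : ℝ) • ((ℓ : ℝ) • P) := by
          rw [smul_smul]
          push_cast
          ring_nf
        rwa [this]
      have hMℓ : ℓ ≤ (m + 1) * ℓ := by nlinarith
      obtain ⟨y, z, hy, hz, hxyz⟩ := dilate_key n S hS hSlat P hP hPfull k hk ℓ hℓ
        ((m + 1) * ℓ) hMℓ x hx1' hx2
      have hsub : (m + 1) * ℓ - ℓ = m * ℓ := by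
        have : (m + 1) * ℓ = m * ℓ + ℓ := by ring
        omega
      rw [hsub] at hz
      have hz' : z ∈ ((m : ℝ) • ((ℓ : ℝ) • P)) ∩ latticePts n := by
        refine ⟨?_, hz.2⟩
        have : ((m * ℓ : ℕ) : ℝ) • P = (m : ℝ) • ((ℓ : ℝ) • P) := by
          rw [smul_smul]
          push_cast
          ring_nf
        rw [← this]
        exact hz.1
      obtain ⟨f', hf', hsum'⟩ := ih hm z hz'
      refine ⟨Fin.cons y f', ?_, ?_⟩
      · intro i
        refine Fin.cases ?_ ?_ i
        · simpa using hy
        · intro j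
          simpa using hf' j
      · rw [Fin.sum_cons, hxyz, hsum']
end

section
/- Let V be a real vector space of finite dimension n ≥ 1, let b be a basis of V, and let M ⊆ V be the ℤ-span of b (a lattice of full rank). Let P = conv(S) be the convex hull of a finite nonempty set S ⊆ M, and assume P has nonempty interior in V. Suppose k ≥ 0 is an integer such that kP contains no point of M in its interior. Then for every integer ℓ ≥ max{n − k, 1} and every integer m ≥ 1, every point of M lying in m(ℓP) is a sum of m points of M ∩ (ℓP). (Corollary 1.4 of the paper, stated for a full-rank lattice in an abstract real vector space.) -/
open Pointwise


set_option linter.unusedSectionVars false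
set_option maxHeartbeats 1000000

section AuxAll

variable {V : Type*} [AddCommGroup V] [Module ℝ V]
  [TopologicalSpace V] [IsTopologicalAddGroup V] [ContinuousSMul ℝ V]

variable {V : Type*} [AddCommGroup V] [Module ℝ V]
  [TopologicalSpace V] [IsTopologicalAddGroup V] [ContinuousSMul ℝ V]

/-- A nonnegative combination of points of a convex set `P` with total mass `a`
lies in `a • P`. -/
lemma comb_mem_smul {P : Set V} (hconv : Convex ℝ P) (hne : P.Nonempty)
    (T : Finset V) (hT : ↑T ⊆ P) (w : V → ℝ) (hw : ∀ v ∈ T, 0 ≤ w v)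
    {a : ℝ} (ha : ∑ v ∈ T, w v = a) :
    ∑ v ∈ T, w v • v ∈ a • P := by
  rcases eq_or_lt_of_le (show (0:ℝ) ≤ a by rw [← ha]; exact Finset.sum_nonneg hw) with h0 | hpos
  · have hz : ∀ v ∈ T, w v = 0 := by
      intro v hv
      have := (Finset.sum_eq_zero_iff_of_nonneg hw).1 (by rw [ha, ← h0])
      exact this v hv
    have : ∑ v ∈ T, w v • v = 0 := Finset.sum_eq_zero fun v hv => by rw [hz v hv, zero_smul]
    rw [this, ← h0, Set.zero_smul_set hne]
    exact Set.mem_zero.2 rfl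
  · have hmem : T.centerMass w id ∈ convexHull ℝ P :=
      T.centerMass_mem_convexHull (fun v hv => hw v hv) (by rw [ha]; exact hpos)
        (fun v hv => hT hv)
    rw [hconv.convexHull_eq] at hmem
    refine ⟨T.centerMass w id, hmem, ?_⟩
    show a • _ = _
    rw [Finset.centerMass, ha, smul_smul, mul_inv_cancel₀ hpos.ne', one_smul]
    simp [id]

/-- Selection of a sub-multiplicity with prescribed total. -/
lemma exists_sub_weights [DecidableEq V] (T : Finset V) (c : V → ℕ) (s : ℕ) (hs : s ≤ ∑ v ∈ T, c v) :
    ∃ d : V → ℕ, (∀ v ∈ T, d v ≤ c v) ∧ ∑ v ∈ T, d v = s := by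
  induction T using Finset.induction generalizing s with
  | empty => exact ⟨fun _ => 0, by simp, by simp at hs ⊢; omega⟩
  | @insert a T ha ih =>
    rw [Finset.sum_insert ha] at hs
    obtain ⟨d, hd1, hd2⟩ := ih (s - min s (c a)) (by omega)
    refine ⟨Function.update d a (min s (c a)), ?_, ?_⟩
    · intro v hv
      rcases Finset.mem_insert.1 hv with rfl | hv
      · simp [Function.update_self]
      · rcases eq_or_ne v a with rfl | hne
        · simp [Function.update_self]
        · simpa [Function.update_of_ne hne] using hd1 v hv
    · rw [Finset.sum_insert ha, Function.update_self]
      have : ∑ v ∈ T, Function.update d a (min s (c a)) v = ∑ v ∈ T, d v :=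
        Finset.sum_congr rfl fun v hv =>
          Function.update_of_ne (by rintro rfl; exact ha hv) _ _
      rw [this, hd2]; omega

/-- If the convex hull of a set has nonempty interior, the set affinely spans. -/
lemma affineSpan_eq_top_of_interior_nonempty {S : Set V}
    (h : (interior (convexHull ℝ S)).Nonempty) : affineSpan ℝ S = ⊤ := by
  obtain ⟨u, hu⟩ := h
  have huS : u ∈ (affineSpan ℝ S : Set V) :=
    convexHull_subset_affineSpan S (interior_subset hu)
  by_contra hne
  have hdir : (affineSpan ℝ S).direction ≠ ⊤ := by
    intro h'
    exact hne ((AffineSubspace.direction_eq_top_iff_of_nonempty ⟨u, huS⟩).1 h')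
  obtain ⟨d, hd⟩ : ∃ d, d ∉ (affineSpan ℝ S).direction := by
    by_contra h'
    push_neg at h'
    exact hdir (Submodule.eq_top_iff'.2 h')
  have hcont : Continuous fun s : ℝ => u + s • d :=
    continuous_const.add (continuous_id.smul continuous_const)
  have hopen : IsOpen ((fun s : ℝ => u + s • d) ⁻¹' interior (convexHull ℝ S)) :=
    isOpen_interior.preimage hcont
  have h0 : (0:ℝ) ∈ (fun s : ℝ => u + s • d) ⁻¹' interior (convexHull ℝ S) := by
    simp [hu]
  obtain ⟨ε, hε, hball⟩ := Metric.isOpen_iff.1 hopen 0 h0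
  have hmem : u + (ε/2) • d ∈ (affineSpan ℝ S : Set V) := by
    refine convexHull_subset_affineSpan S (interior_subset (hball ?_))
    simp [Real.ball_eq_Ioo]
    constructor <;> nlinarith
  have : (ε/2) • d ∈ (affineSpan ℝ S).direction := by
    have := AffineSubspace.vsub_mem_direction hmem huS
    simpa [vsub_eq_sub] using this
  have : d ∈ (affineSpan ℝ S).direction := by
    have h2 := Submodule.smul_mem _ ((ε/2)⁻¹) this
    rwa [smul_smul, inv_mul_cancel₀ (by positivity), one_smul] at h2
  exact hd this

/-- A combination with *strictly positive* coefficients of total mass `k ≥ 1`, over a finite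
subset of `S` that affinely spans, lies in the interior of `k • P` where `P = conv S`. -/
lemma comb_mem_interior_smul {S : Finset V} {P : Set V} (hP : P = convexHull ℝ (S : Set V))
    (T' : Finset V) (hT'S : ↑T' ⊆ (S : Set V)) (hspan : affineSpan ℝ (↑T' : Set V) = ⊤)
    (h : V → ℝ) (hpos : ∀ v ∈ T', 0 < h v) {k : ℕ} (hk1 : 1 ≤ k)
    (hsum : ∑ v ∈ T', h v = (k : ℝ))
    {q : V} (hq : q ∈ interior P) :
    ∑ v ∈ T', h v • v ∈ interior ((k : ℝ) • P) := by
  classical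
  have hconv : Convex ℝ P := hP ▸ convex_convexHull ℝ _
  have hne : P.Nonempty := by
    obtain ⟨v₀, hv₀⟩ := AffineSubspace.nonempty_of_affineSpan_eq_top ℝ V V hspan
    exact ⟨v₀, hP ▸ subset_convexHull ℝ _ (hT'S hv₀)⟩
  have hT'P : ↑T' ⊆ P := fun v hv => hP ▸ subset_convexHull ℝ (S : Set V) (hT'S hv)
  obtain ⟨v₀, hv₀⟩ := AffineSubspace.nonempty_of_affineSpan_eq_top ℝ V V hspan
  have hv₀T : v₀ ∈ T' := hv₀
  -- span of differences is everything
  have hvspan : Submodule.span ℝ ((fun v => v - v₀) '' (↑T' : Set V)) = ⊤ := by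
    have h1 : vectorSpan ℝ (↑T' : Set V) = ⊤ :=
      AffineSubspace.vectorSpan_eq_top_of_affineSpan_eq_top ℝ V V hspan
    rw [vectorSpan_eq_span_vsub_set_right ℝ hv₀] at h1
    simpa [vsub_eq_sub] using h1
  -- coordinates of q
  have hq' : q - v₀ ∈ Submodule.span ℝ ((T'.image (fun v => v - v₀) : Finset V) : Set V) := by
    rw [Finset.coe_image, hvspan]; trivial
  obtain ⟨g, -, hg⟩ := Submodule.mem_span_finset.1 hq'
  have hinj : Set.InjOn (fun v => v - v₀) ↑T' := fun a _ b _ hab => by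
    simpa [sub_left_inj] using hab
  have hgsum : ∑ v ∈ T', g (v - v₀) • (v - v₀) = q - v₀ := by
    rw [← hg, Finset.sum_image (fun a ha b hb hab => hinj ha hb hab)]
  -- affine coordinates w of q with respect to T'
  set w : V → ℝ := fun v =>
    g (v - v₀) + (if v = v₀ then 1 - ∑ u ∈ T', g (u - v₀) else 0) with hw_def
  have hwsum : ∑ v ∈ T', w v = 1 := by
    rw [hw_def]
    rw [Finset.sum_add_distrib, Finset.sum_ite_eq' T' v₀]
    simp [hv₀T]
  have hwcomb : ∑ v ∈ T', w v • v = q := by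
    rw [hw_def]
    have e1 : ∀ v ∈ T', (g (v - v₀) + (if v = v₀ then 1 - ∑ u ∈ T', g (u - v₀) else 0)) • v
        = g (v - v₀) • (v - v₀) + g (v - v₀) • v₀
          + (if v = v₀ then (1 - ∑ u ∈ T', g (u - v₀)) • v₀ else 0) := by
      intro v hv
      rcases eq_or_ne v v₀ with rfl | hne
      · simp [add_smul, smul_sub]
      · simp [hne, add_smul, smul_sub]
    rw [Finset.sum_congr rfl e1]
    rw [Finset.sum_add_distrib, Finset.sum_add_distrib, hgsum, Finset.sum_ite_eq' T' v₀]
    rw [← Finset.sum_smul]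
    simp only [hv₀T, if_true, sub_smul, one_smul]
    abel
  -- the interior point k • q
  have hkR : (0:ℝ) < (k:ℝ) := by exact_mod_cast hk1
  have hp : (k:ℝ) • q ∈ interior ((k:ℝ) • P) := by
    rw [interior_smul₀ hkR.ne' P]
    exact Set.smul_mem_smul_set hq
  -- choose ε
  have hT'ne : T'.Nonempty := ⟨v₀, hv₀T⟩
  set δ : ℝ := T'.inf' hT'ne h with hδ_def
  have hδpos : 0 < δ := (Finset.lt_inf'_iff hT'ne).2 hpos
  have hδle : ∀ v ∈ T', δ ≤ h v := fun v hv => Finset.inf'_le h hv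
  set C : ℝ := 1 + ∑ v ∈ T', |h v - (k:ℝ) * w v| with hC_def
  have hCpos : (0:ℝ) < C := by
    have : (0:ℝ) ≤ ∑ v ∈ T', |h v - (k:ℝ) * w v| :=
      Finset.sum_nonneg fun v _ => abs_nonneg _
    linarith
  have hCle : ∀ v ∈ T', |h v - (k:ℝ) * w v| ≤ C := by
    intro v hv
    have := Finset.single_le_sum (f := fun v => |h v - (k:ℝ) * w v|)
      (fun u _ => abs_nonneg _) hv
    rw [hC_def]; linarith
  set ε : ℝ := δ / C with hε_def
  have hεpos : 0 < ε := div_pos hδpos hCpos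
  -- the perturbed point y
  set y : V := ∑ v ∈ T', ((1 + ε) * h v - ε * ((k:ℝ) * w v)) • v with hy_def
  have hynn : ∀ v ∈ T', 0 ≤ (1 + ε) * h v - ε * ((k:ℝ) * w v) := by
    intro v hv
    have h1 : (1 + ε) * h v - ε * ((k:ℝ) * w v) = h v + ε * (h v - (k:ℝ) * w v) := by ring
    have h2 : ε * |h v - (k:ℝ) * w v| ≤ ε * C :=
      mul_le_mul_of_nonneg_left (hCle v hv) hεpos.le
    have h3 : ε * C = δ := by rw [hε_def]; field_simp
    have h4 : -(ε * (h v - (k:ℝ) * w v)) ≤ ε * |h v - (k:ℝ) * w v| := by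
      rw [← mul_neg]
      exact mul_le_mul_of_nonneg_left (neg_le_abs _) hεpos.le
    have h5 := hδle v hv
    linarith
  have hysum : ∑ v ∈ T', ((1 + ε) * h v - ε * ((k:ℝ) * w v)) = (k:ℝ) := by
    rw [Finset.sum_sub_distrib, ← Finset.mul_sum, ← Finset.mul_sum, ← Finset.mul_sum, hsum, hwsum]
    ring
  have hy : y ∈ (k:ℝ) • P := by
    rw [hy_def]
    exact comb_mem_smul hconv hne T' hT'P _ hynn hysum
  -- the combination identity
  have hkey : ε • ((k:ℝ) • q) + y = (1 + ε) • ∑ v ∈ T', h v • v := by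
    rw [hy_def, ← hwcomb]
    rw [Finset.smul_sum, Finset.smul_sum, Finset.smul_sum, ← Finset.sum_add_distrib]
    refine Finset.sum_congr rfl fun v hv => ?_
    rw [smul_smul, smul_smul, smul_smul, ← add_smul]
    congr 1
    ring
  have h1ε : (0:ℝ) < 1 + ε := by linarith
  have hz_eq : ∑ v ∈ T', h v • v
      = (ε / (1 + ε)) • ((k:ℝ) • q) + (1 / (1 + ε)) • y := by
    have h2 := congrArg (fun z => (1 / (1 + ε)) • z) hkey
    simp only [smul_add, smul_smul] at h2
    rw [one_div, inv_mul_cancel₀ h1ε.ne', one_smul] at h2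
    rw [← h2, smul_smul, one_div]
    congr 2
    ring
  rw [hz_eq]
  exact (hconv.smul (k:ℝ)).combo_interior_self_mem_interior hp hy
    (div_pos hεpos h1ε) (by positivity)
    (by field_simp; ring)

lemma split_lemma [FiniteDimensional ℝ V] {n : ℕ} (hrank : Module.finrank ℝ V = n)
    (M : Submodule ℤ V) (S : Finset V) (hSM : ∀ x ∈ S, x ∈ M)
    {P : Set V} (hP : P = convexHull ℝ (S : Set V))
    (hspanS : affineSpan ℝ (S : Set V) = ⊤)
    {q : V} (hq : q ∈ interior P)
    (k : ℕ) (hk : ∀ x ∈ interior ((k : ℝ) • P), x ∉ M)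
    (ℓ : ℕ) (hℓ1 : 1 ≤ ℓ) (hℓ2 : n ≤ ℓ + k)
    (m : ℕ) (hm : 1 ≤ m) (x : V) (hxM : x ∈ M) (hx : x ∈ ((m * ℓ : ℕ) : ℝ) • P) :
    ∃ y, y ∈ ((ℓ : ℝ) • P) ∧ y ∈ M ∧ x - y ∈ (((m - 1) * ℓ : ℕ) : ℝ) • P ∧ x - y ∈ M := by
  classical
  have hconv : Convex ℝ P := hP ▸ convex_convexHull ℝ _
  have hSP : (S : Set V) ⊆ P := hP ▸ subset_convexHull ℝ _
  have hne : P.Nonempty := by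
    obtain ⟨v, hv⟩ := AffineSubspace.nonempty_of_affineSpan_eq_top ℝ V V hspanS
    exact ⟨v, hSP hv⟩
  set N : ℕ := m * ℓ with hN_def
  have hℓN : ℓ ≤ N := Nat.le_mul_of_pos_left ℓ hm
  have hN1 : 1 ≤ N := le_trans hℓ1 hℓN
  obtain ⟨p', hp'P, hp'x⟩ := hx
  -- Carathéodory
  have hp'S : p' ∈ convexHull ℝ (S : Set V) := hP ▸ hp'P
  rw [convexHull_eq_union] at hp'S
  simp only [Set.mem_iUnion] at hp'S
  obtain ⟨T, hTS, hTai, hT⟩ := hp'S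
  have hTne : T.Nonempty := Finset.nonempty_of_ne_empty (by rintro rfl; simp at hT)
  have hTP : (T : Set V) ⊆ P := hTS.trans hSP
  rw [Finset.convexHull_eq] at hT
  obtain ⟨w, hw0, hw1, hwc⟩ := hT
  rw [Finset.centerMass_eq_of_sum_1 T id hw1] at hwc
  simp only [id] at hwc
  -- cardinality bound
  have hcardT : T.card ≤ n + 1 := by
    have h1 := hTai.card_le_finrank_succ
    rw [Fintype.card_coe] at h1
    have h2 : Module.finrank ℝ (vectorSpan ℝ (Set.range ((↑) : ↑T → V))) ≤ n :=
      hrank ▸ Submodule.finrank_le _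
    omega
  -- integer and fractional parts
  set μ : V → ℝ := fun v => (N : ℝ) * w v with hμ_def
  have hμ0 : ∀ v ∈ T, 0 ≤ μ v := fun v hv => mul_nonneg (Nat.cast_nonneg N) (hw0 v hv)
  set c : V → ℕ := fun v => ⌊μ v⌋₊ with hc_def
  set F : V → ℝ := fun v => μ v - (c v : ℝ) with hF_def
  have hF0 : ∀ v ∈ T, 0 ≤ F v := fun v hv => sub_nonneg.2 (Nat.floor_le (hμ0 v hv))
  have hF1 : ∀ v ∈ T, F v < 1 := by
    intro v hv
    have := Nat.lt_floor_add_one (μ v)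
    simp only [hF_def]
    push_cast
    linarith
  have hμsum : ∑ v ∈ T, μ v = (N : ℝ) := by
    rw [hμ_def, ← Finset.mul_sum, hw1, mul_one]
  have hp'x' : ((N : ℕ) : ℝ) • p' = x := hp'x
  have hxsum : x = ∑ v ∈ T, μ v • v := by
    rw [← hp'x', ← hwc, Finset.smul_sum]
    exact Finset.sum_congr rfl fun v hv => by rw [smul_smul]
  set C : ℕ := ∑ v ∈ T, c v with hC_def
  have hCN : C ≤ N := by
    have h1 : (C : ℝ) ≤ (N : ℝ) := by
      rw [hC_def]
      push_cast
      calc ∑ v ∈ T, (c v : ℝ) ≤ ∑ v ∈ T, μ v :=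
            Finset.sum_le_sum fun v hv => Nat.floor_le (hμ0 v hv)
        _ = (N : ℝ) := hμsum
    exact_mod_cast h1
  set t : ℕ := N - C with ht_def
  have htR : (t : ℝ) = ∑ v ∈ T, F v := by
    have : ∑ v ∈ T, F v = (N : ℝ) - (C : ℝ) := by
      rw [hF_def]
      rw [Finset.sum_sub_distrib, hμsum, hC_def]
      push_cast
      ring
    rw [this, ht_def]
    push_cast [Nat.cast_sub hCN]
    ring
  have htcard : t < T.card := by
    have h1 : (t : ℝ) < (T.card : ℝ) := by
      rw [htR]
      calc ∑ v ∈ T, F v < ∑ v ∈ T, (1 : ℝ) :=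
            Finset.sum_lt_sum_of_nonempty hTne hF1
        _ = (T.card : ℝ) := by simp
    exact_mod_cast h1
  set r : V := ∑ v ∈ T, F v • v with hr_def
  have hxr : x = (∑ v ∈ T, (c v : ℝ) • v) + r := by
    rw [hxsum, hr_def, ← Finset.sum_add_distrib]
    refine Finset.sum_congr rfl fun v hv => ?_
    rw [← add_smul]
    congr 1
    simp [hF_def]
  have hcM : ∑ v ∈ T, (c v : ℝ) • v ∈ M := by
    refine Submodule.sum_mem M fun v hv => ?_
    rw [show ((c v : ℝ) • v) = c v • v from Nat.cast_smul_eq_nsmul ℝ (c v) v]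
    exact nsmul_mem (hSM v (hTS hv)) (c v)
  have hrM : r ∈ M := by
    have : r = x - ∑ v ∈ T, (c v : ℝ) • v := by rw [hxr]; abel
    rw [this]
    exact sub_mem hxM hcM
  have hrP : r ∈ ((t : ℕ) : ℝ) • P :=
    comb_mem_smul hconv hne T hTP F hF0 htR.symm
  by_cases hcase : t ≤ ℓ
  · -- the splitting case
    obtain ⟨d, hd1, hd2⟩ := exists_sub_weights T c (ℓ - t) (by omega)
    set y : V := r + ∑ v ∈ T, (d v : ℝ) • v with hy_def
    have hdsum : ∑ v ∈ T, (d v : ℝ) = ((ℓ - t : ℕ) : ℝ) := by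
      rw [← hd2]; push_cast; rfl
    have hdP : ∑ v ∈ T, (d v : ℝ) • v ∈ ((ℓ - t : ℕ) : ℝ) • P :=
      comb_mem_smul hconv hne T hTP _ (fun v hv => Nat.cast_nonneg _) hdsum
    have hyP : y ∈ (ℓ : ℝ) • P := by
      have hsplit : ((ℓ : ℝ)) • P = ((t : ℕ) : ℝ) • P + ((ℓ - t : ℕ) : ℝ) • P := by
        rw [← hconv.add_smul (Nat.cast_nonneg t) (Nat.cast_nonneg (ℓ - t))]
        congr 1
        push_cast [Nat.cast_sub hcase]
        ring
      rw [hsplit, hy_def]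
      exact Set.add_mem_add hrP hdP
    have hdM : ∑ v ∈ T, (d v : ℝ) • v ∈ M := by
      refine Submodule.sum_mem M fun v hv => ?_
      rw [show ((d v : ℝ) • v) = d v • v from Nat.cast_smul_eq_nsmul ℝ (d v) v]
      exact nsmul_mem (hSM v (hTS hv)) (d v)
    have hyM : y ∈ M := add_mem hrM hdM
    have hxy : x - y = ∑ v ∈ T, ((c v : ℝ) - (d v : ℝ)) • v := by
      rw [hxr, hy_def]
      simp only [sub_smul]
      rw [Finset.sum_sub_distrib]
      abel
    have hmass : ∑ v ∈ T, ((c v : ℝ) - (d v : ℝ)) = (((m - 1) * ℓ : ℕ) : ℝ) := by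
      rw [Finset.sum_sub_distrib]
      have e1 : (m - 1) * ℓ + ℓ = N := by
        have := Nat.sub_one_mul m ℓ
        omega
      have e2 : C - (ℓ - t) = (m - 1) * ℓ := by omega
      have e3 : ℓ - t ≤ C := by omega
      rw [hdsum]
      push_cast [Nat.cast_sub hcase, ← e2, Nat.cast_sub e3]
      rw [hC_def]
      push_cast
      ring
    have hxyP : x - y ∈ (((m - 1) * ℓ : ℕ) : ℝ) • P := by
      rw [hxy]
      exact comb_mem_smul hconv hne T hTP _
        (fun v hv => by simp only [sub_nonneg]; exact_mod_cast hd1 v hv) hmass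
    exact ⟨y, hyP, hyM, hxyP, sub_mem hxM hyM⟩
  · -- the contradiction case
    exfalso
    push_neg at hcase
    obtain ⟨v₀, hv₀⟩ := hTne
    have hv₀S : v₀ ∈ S := hTS hv₀
    -- linear independence of differences
    have hli : LinearIndependent ℝ
        ((↑) : ((fun p => p -ᵥ v₀) '' ((↑T : Set V) \ {v₀})) → V) :=
      (affineIndependent_set_iff_linearIndependent_vsub ℝ
        (show v₀ ∈ (↑T : Set V) from hv₀)).1 hTai
    have hsub : ((fun p => p -ᵥ v₀) '' ((↑T : Set V) \ {v₀}))
        ⊆ ((fun p => p -ᵥ v₀) '' (↑S : Set V)) :=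
      Set.image_mono (Set.diff_subset.trans hTS)
    obtain ⟨B, hBsub, hs₀B, hSspanB, hBli⟩ : ∃ B ⊆ ((fun p => p -ᵥ v₀) '' (↑S : Set V)),
        ((fun p => p -ᵥ v₀) '' ((↑T : Set V) \ {v₀})) ⊆ B ∧
        ((fun p => p -ᵥ v₀) '' (↑S : Set V)) ⊆ Submodule.span ℝ B ∧
        LinearIndependent ℝ ((↑) : B → V) := exists_linearIndepOn_id_extension hli hsub
    have hspanB : Submodule.span ℝ B = ⊤ := by
      have h1 : vectorSpan ℝ (S : Set V) = ⊤ :=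
        AffineSubspace.vectorSpan_eq_top_of_affineSpan_eq_top ℝ V V hspanS
      rw [vectorSpan_eq_span_vsub_set_right ℝ (show v₀ ∈ (S : Set V) from hv₀S)] at h1
      have h2 : Submodule.span ℝ ((fun p => p -ᵥ v₀) '' (↑S : Set V)) ≤ Submodule.span ℝ B :=
        Submodule.span_le.2 hSspanB
      rw [h1] at h2
      exact top_le_iff.1 h2
    have hBfin : B.Finite := hBli.setFinite
    haveI : Fintype ↥B := hBfin.fintype
    have hcardB : B.toFinset.card = n := by
      have h1 := finrank_span_set_eq_card hBli
      rw [hspanB, finrank_top, hrank] at h1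
      exact h1.symm
    set T' : Finset V := insert v₀ (B.toFinset.image (fun u => u + v₀)) with hT'_def
    have hT'S : (T' : Set V) ⊆ (S : Set V) := by
      intro v hv
      rw [hT'_def] at hv
      simp only [Finset.coe_insert, Set.mem_insert_iff, Finset.coe_image,
        Set.mem_image, Set.mem_setOf_eq] at hv
      rcases hv with rfl | ⟨u, hu, rfl⟩
      · exact hv₀S
      · have hu' : u ∈ B := by simpa using hu
        obtain ⟨s, hs, rfl⟩ := hBsub hu'
        simpa [vsub_eq_sub] using hs
    have hTT' : T ⊆ T' := by
      intro v hv
      rw [hT'_def]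
      rcases eq_or_ne v v₀ with rfl | hne'
      · exact Finset.mem_insert_self _ _
      · refine Finset.mem_insert_of_mem (Finset.mem_image.2 ⟨v - v₀, ?_, by abel⟩)
        rw [Set.mem_toFinset]
        exact hs₀B ⟨v, ⟨hv, hne'⟩, by simp [vsub_eq_sub]⟩
    have hcardT' : T'.card ≤ n + 1 := by
      rw [hT'_def]
      calc (insert v₀ (B.toFinset.image (fun u => u + v₀))).card
          ≤ (B.toFinset.image (fun u => u + v₀)).card + 1 := Finset.card_insert_le _ _
        _ ≤ B.toFinset.card + 1 := by
            have := Finset.card_image_le (f := fun u => u + v₀) (s := B.toFinset)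
            omega
        _ = n + 1 := by rw [hcardB]
    have hv₀T' : v₀ ∈ T' := Finset.mem_insert_self _ _
    have hspanT' : affineSpan ℝ (T' : Set V) = ⊤ := by
      rw [AffineSubspace.affineSpan_eq_top_iff_vectorSpan_eq_top_of_nonempty ℝ V V
        ⟨v₀, show v₀ ∈ (T' : Set V) from hv₀T'⟩]
      rw [vectorSpan_eq_span_vsub_set_right ℝ (show v₀ ∈ (T' : Set V) from hv₀T')]
      have hBsub' : B ⊆ (fun p => p -ᵥ v₀) '' (T' : Set V) := by
        intro u hu
        refine ⟨u + v₀, ?_, by simp [vsub_eq_sub]⟩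
        rw [hT'_def]
        simp only [Finset.coe_insert, Set.mem_insert_iff, Finset.coe_image, Set.mem_image]
        exact Or.inr ⟨u, by simpa using hu, rfl⟩
      have h2 : Submodule.span ℝ B ≤ Submodule.span ℝ ((fun p => p -ᵥ v₀) '' (T' : Set V)) :=
        Submodule.span_mono hBsub'
      rw [hspanB] at h2
      exact top_le_iff.1 h2
    -- the numerology
    have hcardTT' : T.card ≤ T'.card := Finset.card_le_card hTT'
    set c' : ℕ := T'.card - t with hc'_def
    have hc'1 : 1 ≤ c' := by omega
    have hc'k : c' ≤ k := by omega
    have hk1 : 1 ≤ k := le_trans hc'1 hc'k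
    -- the coefficients
    set G : V → ℝ := fun v => if v ∈ T then F v else 0 with hG_def
    set h' : V → ℝ := fun v => (1 - G v) + (if v = v₀ then ((k - c' : ℕ) : ℝ) else 0)
      with hh'_def
    have hpos : ∀ v ∈ T', 0 < h' v := by
      intro v hv
      have h1 : G v < 1 := by
        rw [hG_def]
        by_cases hvT : v ∈ T
        · simp only [hvT, if_true]; exact hF1 v hvT
        · simp [hvT]
      have h2 : (0:ℝ) ≤ (if v = v₀ then ((k - c' : ℕ) : ℝ) else 0) := by
        split <;> positivity
      rw [hh'_def]
      simp only
      linarith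
    have hGsum : ∑ v ∈ T', G v = (t : ℝ) := by
      rw [← Finset.sum_subset hTT' (fun v _ hvT => by rw [hG_def]; simp [hvT])]
      rw [htR]
      exact Finset.sum_congr rfl fun v hv => by rw [hG_def]; simp [hv]
    have hsum : ∑ v ∈ T', h' v = (k : ℝ) := by
      rw [hh'_def]
      rw [Finset.sum_add_distrib, Finset.sum_sub_distrib, hGsum,
        Finset.sum_ite_eq' T' v₀]
      simp only [hv₀T', if_true, Finset.sum_const, nsmul_eq_mul, mul_one]
      have e1 : (c' : ℝ) = (T'.card : ℝ) - (t : ℝ) := by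
        rw [hc'_def]; push_cast [Nat.cast_sub (by omega : t ≤ T'.card)]; ring
      have e2 : ((k - c' : ℕ) : ℝ) = (k : ℝ) - (c' : ℝ) := by
        push_cast [Nat.cast_sub hc'k]; ring
      rw [e2, e1]
      ring
    -- the lattice point in the interior
    have hzint : ∑ v ∈ T', h' v • v ∈ interior ((k : ℝ) • P) :=
      comb_mem_interior_smul hP T' hT'S hspanT' h' hpos hk1 hsum hq
    have hGvsum : ∑ v ∈ T', G v • v = r := by
      rw [← Finset.sum_subset hTT' (fun v _ hvT => by rw [hG_def]; simp [hvT])]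
      rw [hr_def]
      exact Finset.sum_congr rfl fun v hv => by rw [hG_def]; simp [hv]
    have hzM : ∑ v ∈ T', h' v • v ∈ M := by
      have hz_eq : ∑ v ∈ T', h' v • v
          = ((∑ v ∈ T', v) - r) + ((k - c' : ℕ) : ℝ) • v₀ := by
        rw [hh'_def]
        simp only [add_smul, sub_smul, one_smul, ite_smul, zero_smul]
        rw [Finset.sum_add_distrib, Finset.sum_sub_distrib, hGvsum]
        congr 1
        rw [Finset.sum_ite_eq' T' v₀ (fun v => ((k - c' : ℕ) : ℝ) • v)]
        simp [hv₀T']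
      rw [hz_eq]
      refine add_mem (sub_mem (Submodule.sum_mem M fun v hv => hSM v (hT'S hv)) hrM) ?_
      rw [show (((k - c' : ℕ) : ℝ) • v₀) = (k - c') • v₀ from
        Nat.cast_smul_eq_nsmul ℝ (k - c') v₀]
      exact nsmul_mem (hSM v₀ hv₀S) (k - c')
    exact hk _ hzint hzM


lemma main_ind [FiniteDimensional ℝ V] {n : ℕ} (hrank : Module.finrank ℝ V = n)
    (M : Submodule ℤ V) (S : Finset V) (hSM : ∀ x ∈ S, x ∈ M)
    {P : Set V} (hP : P = convexHull ℝ (S : Set V))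
    (hspanS : affineSpan ℝ (S : Set V) = ⊤)
    {q : V} (hq : q ∈ interior P)
    (k : ℕ) (hk : ∀ x ∈ interior ((k : ℝ) • P), x ∉ M)
    (ℓ : ℕ) (hℓ1 : 1 ≤ ℓ) (hℓ2 : n ≤ ℓ + k) :
    ∀ m : ℕ, 1 ≤ m → ∀ x : V, x ∈ M → x ∈ ((m * ℓ : ℕ) : ℝ) • P →
      ∃ f : Fin m → V, (∀ i, f i ∈ ((ℓ : ℝ) • P) ∧ f i ∈ M) ∧ x = ∑ i, f i := by
  have hne : P.Nonempty := by
    obtain ⟨v, hv⟩ := AffineSubspace.nonempty_of_affineSpan_eq_top ℝ V V hspanS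
    exact ⟨v, hP ▸ subset_convexHull ℝ _ hv⟩
  intro m
  induction m with
  | zero => exact fun h => absurd h (by omega)
  | succ m ih =>
    intro _ x hxM hx
    obtain ⟨y, hyP, hyM, hxyP, hxyM⟩ :=
      split_lemma hrank M S hSM hP hspanS hq k hk ℓ hℓ1 hℓ2 (m + 1)
        (Nat.le_add_left 1 m) x hxM hx
    rcases Nat.eq_zero_or_pos m with rfl | hm'
    · have h0 : x - y ∈ ((0 : ℕ) : ℝ) • P := by simpa using hxyP
      rw [Nat.cast_zero, Set.zero_smul_set hne] at h0
      have hxy : x = y := sub_eq_zero.1 (Set.mem_zero.1 h0)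
      refine ⟨fun _ => y, fun i => ⟨hyP, hyM⟩, ?_⟩
      rw [hxy]
      simp
    · obtain ⟨f, hf, hfsum⟩ := ih hm' (x - y) hxyM (by simpa using hxyP)
      refine ⟨Fin.cons y f, ?_, ?_⟩
      · intro i
        refine Fin.cases ?_ ?_ i
        · exact ⟨hyP, hyM⟩
        · exact fun j => hf j
      · rw [Fin.sum_cons, ← hfsum]
        abel

end AuxAll

/-- **Corollary 1.4** (abstract form). Let `V` be a real topological vector space of finite
dimension `n ≥ 1`, `b` a basis of `V` and `M` the `ℤ`-span of `b` (a full-rank lattice).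
Let `P = conv S` for a finite nonempty `S ⊆ M`, with nonempty interior in `V`. If `k ≥ 0`
is an integer such that `kP` contains no point of `M` in its interior, then for every
`ℓ ≥ max {n - k, 1}` and every `m ≥ 1`, every point of `M` lying in `m(ℓP)` is a sum of
`m` points of `M ∩ ℓP`. -/
theorem dilate_is_normal_lattice
    (V : Type*) [AddCommGroup V] [Module ℝ V]
    [TopologicalSpace V] [IsTopologicalAddGroup V] [ContinuousSMul ℝ V]
    (n : ℕ) (hn : 1 ≤ n)
    (b : Module.Basis (Fin n) ℝ V)
    (M : Submodule ℤ V) (hM : M = Submodule.span ℤ (Set.range ⇑b))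
    (S : Finset V) (hS : S.Nonempty) (hSM : ∀ x ∈ S, x ∈ M)
    (P : Set V) (hP : P = convexHull ℝ (S : Set V))
    (hPfull : (interior P).Nonempty)
    (k : ℕ)
    (hk : ∀ x ∈ interior ((k : ℝ) • P), x ∉ M)
    (ℓ : ℕ) (hℓ : max (n - k) 1 ≤ ℓ) :
    ∀ m : ℕ, 1 ≤ m →
      ∀ x ∈ ((m : ℝ) • ((ℓ : ℝ) • P)), x ∈ M →
        ∃ f : Fin m → V,
          (∀ i, f i ∈ ((ℓ : ℝ) • P) ∧ f i ∈ M) ∧ x = ∑ i, f i := by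
  haveI : FiniteDimensional ℝ V := Module.Finite.of_basis b
  have hrank : Module.finrank ℝ V = n := by
    rw [Module.finrank_eq_card_basis b, Fintype.card_fin]
  have hspanS : affineSpan ℝ (S : Set V) = ⊤ :=
    affineSpan_eq_top_of_interior_nonempty (hP ▸ hPfull)
  obtain ⟨q, hq⟩ := hPfull
  have hℓ1 : 1 ≤ ℓ := le_trans (le_max_right _ _) hℓ
  have hℓ2 : n ≤ ℓ + k := by
    have := le_trans (le_max_left _ _) hℓ
    omega
  intro m hm x hx hxM
  have hx' : x ∈ ((m * ℓ : ℕ) : ℝ) • P := by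
    rw [smul_smul] at hx
    have e : (m : ℝ) * (ℓ : ℝ) = ((m * ℓ : ℕ) : ℝ) := by push_cast; ring
    rwa [e] at hx
  exact main_ind hrank M S hSM hP hspanS hq k hk ℓ hℓ1 hℓ2 m hm x hxM hx'
end

section
/- Let n ≥ 1 and let P ⊆ ℝ^n be a full-dimensional lattice polytope. Suppose k ≥ 0 is an integer such that kP contains no lattice point in its interior, and let ℓ be an integer with ℓ ≥ max{n − k, 1}. Then for every integer m ≥ 1, every lattice point of (m+1)ℓP is the sum of a lattice point of mℓP and a lattice point of ℓP; equivalently, ((m+1)ℓP) ∩ ℤ^n = (mℓP ∩ ℤ^n) + (ℓP ∩ ℤ^n). -/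
open Pointwise
set_option maxHeartbeats 1000000

lemma latticePts_zero (n : ℕ) : (0 : Fin n → ℝ) ∈ latticePts n :=
  fun _ => ⟨0, by simp⟩

lemma latticePts_add {n : ℕ} {x y : Fin n → ℝ} (hx : x ∈ latticePts n) (hy : y ∈ latticePts n) :
    x + y ∈ latticePts n := by
  intro i
  obtain ⟨a, ha⟩ := hx i; obtain ⟨b, hb⟩ := hy i
  exact ⟨a + b, by simp [ha, hb]⟩

lemma latticePts_sub {n : ℕ} {x y : Fin n → ℝ} (hx : x ∈ latticePts n) (hy : y ∈ latticePts n) :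
    x - y ∈ latticePts n := by
  intro i
  obtain ⟨a, ha⟩ := hx i; obtain ⟨b, hb⟩ := hy i
  exact ⟨a - b, by simp [ha, hb]⟩

lemma latticePts_intSmul {n : ℕ} (c : ℤ) {v : Fin n → ℝ} (hv : v ∈ latticePts n) :
    (c : ℝ) • v ∈ latticePts n := by
  intro i
  obtain ⟨a, ha⟩ := hv i
  exact ⟨c * a, by simp [ha]⟩

lemma latticePts_natSmul {n : ℕ} (c : ℕ) {v : Fin n → ℝ} (hv : v ∈ latticePts n) :
    (c : ℝ) • v ∈ latticePts n := by
  simpa using latticePts_intSmul (c : ℤ) hv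

lemma latticePts_sum {n : ℕ} {α : Type*} (t : Finset α) (f : α → Fin n → ℝ)
    (hf : ∀ a ∈ t, f a ∈ latticePts n) : ∑ a ∈ t, f a ∈ latticePts n := by
  classical
  induction t using Finset.induction_on with
  | empty => simpa using latticePts_zero n
  | @insert a s ha ih =>
    rw [Finset.sum_insert ha]
    exact latticePts_add (hf a (Finset.mem_insert_self a s))
      (ih fun b hb => hf b (Finset.mem_insert_of_mem hb))

/-- Selection lemma: choose `c ≤ m` pointwise with prescribed sum. -/
lemma exists_subweight {α : Type*} [DecidableEq α] (t : Finset α) (m : α → ℕ) (d : ℕ)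
    (hd : d ≤ ∑ a ∈ t, m a) :
    ∃ c : α → ℕ, (∀ a, c a ≤ m a) ∧ ∑ a ∈ t, c a = d := by
  induction t using Finset.induction_on generalizing d with
  | empty => exact ⟨fun _ => 0, fun _ => Nat.zero_le _, by simpa using (Nat.le_zero.mp (by simpa using hd)).symm ▸ rfl⟩
  | @insert a s ha ih =>
    rw [Finset.sum_insert ha] at hd
    obtain ⟨c, hc, hcs⟩ := ih (d - min d (m a)) (by omega)
    refine ⟨Function.update c a (min d (m a)), ?_, ?_⟩
    · intro b
      by_cases hb : b = a
      · subst hb; simp [Function.update]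
      · simp [Function.update, hb]; exact hc b
    · rw [Finset.sum_insert ha, Function.update_self]
      have : ∑ b ∈ s, Function.update c a (min d (m a)) b = ∑ b ∈ s, c b := by
        apply Finset.sum_congr rfl
        intro b hb
        have : b ≠ a := fun h => ha (h ▸ hb)
        simp [Function.update, this]
      rw [this, hcs]; omega

/-- A nonnegative combination of points of a convex set `P` with total weight `d > 0`
lies in `d • P`. -/
lemma sum_mem_dilate {n : ℕ} {P : Set (Fin n → ℝ)} (hPc : Convex ℝ P)
    {T : Finset (Fin n → ℝ)} (hT : ↑T ⊆ P) {ν : (Fin n → ℝ) → ℝ}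
    (hν : ∀ v ∈ T, 0 ≤ ν v) {d : ℝ} (hd : 0 < d)
    (hsum : ∑ v ∈ T, ν v = d) : ∑ v ∈ T, ν v • v ∈ d • P := by
  have key : ∑ v ∈ T, ν v • v = d • ∑ v ∈ T, (ν v / d) • v := by
    rw [Finset.smul_sum]
    refine Finset.sum_congr rfl fun v _ => ?_
    rw [smul_smul, mul_div_cancel₀ _ hd.ne']
  rw [key]
  refine Set.smul_mem_smul_set ?_
  refine hPc.sum_mem (fun v hv => div_nonneg (hν v hv) hd.le) ?_ (fun v hv => hT hv)
  rw [← Finset.sum_div, hsum, div_self hd.ne']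

/-- Let `P ⊆ ℝ^n` (`n ≥ 1`) be a full-dimensional lattice polytope, `k ≥ 0` an integer such
that `kP` contains no lattice point in its interior, and `ℓ ≥ max {n - k, 1}`. Then for every
`m ≥ 1`, `((m+1)ℓP) ∩ ℤ^n = (mℓP ∩ ℤ^n) + (ℓP ∩ ℤ^n)` (Minkowski sum). -/
theorem lattice_points_decompose
    (n : ℕ) (hn : 1 ≤ n)
    (S : Finset (Fin n → ℝ)) (hS : S.Nonempty)
    (hSlat : (S : Set (Fin n → ℝ)) ⊆ latticePts n)
    (P : Set (Fin n → ℝ)) (hP : P = convexHull ℝ (S : Set (Fin n → ℝ)))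
    (hPfull : (interior P).Nonempty)
    (k : ℕ)
    (hk : ∀ x ∈ interior ((k : ℝ) • P), x ∉ latticePts n)
    (ℓ : ℕ) (hℓ : max (n - k) 1 ≤ ℓ) :
    ∀ m : ℕ, 1 ≤ m →
      ((((m + 1) * ℓ : ℕ) : ℝ) • P) ∩ latticePts n
        = ((((m * ℓ : ℕ) : ℝ) • P) ∩ latticePts n) + (((ℓ : ℝ) • P) ∩ latticePts n) := by
  classical
  have hℓ1 : 1 ≤ ℓ := le_trans (le_max_right _ _) hℓ
  have hnℓk : n ≤ ℓ + k := by
    have h := le_trans (le_max_left (n - k) 1) hℓ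
    omega
  have hPc : Convex ℝ P := hP ▸ convex_convexHull ℝ _
  have hSP : (S : Set (Fin n → ℝ)) ⊆ P := hP ▸ subset_convexHull ℝ _
  intro m hm
  apply Set.Subset.antisymm
  · -- hard direction
    rintro z ⟨hzP, hzlat⟩
    set c : ℕ := (m + 1) * ℓ with hc_def
    have hℓc : ℓ ≤ c := Nat.le_mul_of_pos_left ℓ (by omega)
    have hmℓc : m * ℓ + ℓ = c := by rw [hc_def]; ring
    obtain ⟨q, hqP, hqz⟩ := hzP
    have hq' : q ∈ convexHull ℝ (S : Set (Fin n → ℝ)) := hP ▸ hqP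
    rw [convexHull_eq_union] at hq'
    simp only [Set.mem_iUnion] at hq'
    obtain ⟨t, htS, hta, hqt⟩ := hq'
    have htne : t.Nonempty := by
      rcases t.eq_empty_or_nonempty with h | h
      · subst h; simp at hqt
      · exact h
    obtain ⟨p₀, hp₀t⟩ := htne
    rw [Finset.convexHull_eq] at hqt
    obtain ⟨w, hw0, hw1, hwq⟩ := hqt
    rw [t.centerMass_eq_of_sum_1 _ hw1] at hwq
    simp only [id] at hwq
    -- affine span of S is ⊤
    have hspan : affineSpan ℝ (S : Set (Fin n → ℝ)) = ⊤ := by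
      have h1 : affineSpan ℝ P = ⊤ := hPc.interior_nonempty_iff_affineSpan_eq_top.mp hPfull
      rwa [hP, affineSpan_convexHull] at h1
    have hSne : (S : Set (Fin n → ℝ)).Nonempty := by exact_mod_cast hS
    have hvs : vectorSpan ℝ (S : Set (Fin n → ℝ)) = ⊤ :=
      (AffineSubspace.affineSpan_eq_top_iff_vectorSpan_eq_top_of_nonempty ℝ (Fin n → ℝ) (Fin n → ℝ) hSne).mp hspan
    have hp₀S : p₀ ∈ (S : Set (Fin n → ℝ)) := htS hp₀t
    have hp₀t' : p₀ ∈ (t : Set (Fin n → ℝ)) := hp₀t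
    have hBspan : Submodule.span ℝ ((· -ᵥ p₀) '' ((S : Set (Fin n → ℝ)) \ {p₀})) = ⊤ := by
      rw [← vectorSpan_eq_span_vsub_set_right_ne ℝ hp₀S]; exact hvs
    have hAli : LinearIndependent ℝ
        ((↑) : ((· -ᵥ p₀) '' ((t : Set (Fin n → ℝ)) \ {p₀})) → (Fin n → ℝ)) :=
      (affineIndependent_set_iff_linearIndependent_vsub ℝ hp₀t').mp hta
    obtain ⟨b, hbB, hAb, hBb, hbli'⟩ := exists_linearIndepOn_id_extension hAli
      (Set.image_mono (Set.diff_subset_diff_left (by exact_mod_cast htS)))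
    have hbli : LinearIndependent ℝ ((↑) : b → (Fin n → ℝ)) := hbli'
    have hbspan : Submodule.span ℝ b = ⊤ := by
      rw [eq_top_iff, ← hBspan]
      exact Submodule.span_le.mpr hBb
    have hbfin : b.Finite := ((S.finite_toSet.diff).image _).subset hbB
    haveI : Fintype b := hbfin.fintype
    have hbcard : b.toFinset.card = n := by
      have h1 := finrank_span_set_eq_card hbli
      rw [hbspan, finrank_top] at h1
      rw [← h1, Module.finrank_fin_fun]
    have h0b : (0 : Fin n → ℝ) ∉ b := fun h => hbli.ne_zero ⟨0, h⟩ rfl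
    set T : Finset (Fin n → ℝ) := insert p₀ (b.toFinset.image (· +ᵥ p₀)) with hT_def
    have hp₀T : p₀ ∈ T := Finset.mem_insert_self _ _
    have hp₀nimg : p₀ ∉ b.toFinset.image (· +ᵥ p₀) := by
      intro h
      obtain ⟨y, hy, hy2⟩ := Finset.mem_image.mp h
      have : y = 0 := by
        have := hy2
        simpa [vadd_eq_add] using congrArg (fun u => u - p₀) this
      exact h0b (this ▸ (Set.mem_toFinset.mp hy))
    have hTS : (T : Set (Fin n → ℝ)) ⊆ (S : Set (Fin n → ℝ)) := by
      intro x hx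
      rw [hT_def] at hx
      simp only [Finset.coe_insert, Set.mem_insert_iff] at hx
      rcases hx with rfl | hx
      · exact hp₀S
      · simp only [Finset.coe_image, Set.coe_toFinset, Set.mem_image] at hx
        obtain ⟨y, hy, rfl⟩ := hx
        obtain ⟨s, hs, rfl⟩ := hbB hy
        simpa [vsub_vadd] using hs.1
    have htT : t ⊆ T := by
      intro v hv
      by_cases hvp : v = p₀
      · subst hvp; exact hp₀T
      · have : v -ᵥ p₀ ∈ b := hAb ⟨v, ⟨hv, hvp⟩, rfl⟩
        rw [hT_def]
        refine Finset.mem_insert_of_mem (Finset.mem_image.mpr ⟨v -ᵥ p₀, Set.mem_toFinset.mpr this, ?_⟩)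
        simp [vsub_vadd]
    have hTdiff : (T : Set (Fin n → ℝ)) \ {p₀} = (· +ᵥ p₀) '' b := by
      ext x
      simp only [Set.mem_diff, Set.mem_singleton_iff, hT_def, Finset.coe_insert,
        Set.mem_insert_iff, Finset.coe_image, Set.coe_toFinset, Set.mem_image]
      constructor
      · rintro ⟨rfl | hx, hne⟩
        · exact absurd rfl hne
        · exact hx
      · rintro ⟨y, hy, rfl⟩
        refine ⟨Or.inr ⟨y, hy, rfl⟩, ?_⟩
        intro h
        have : y = 0 := by simpa [vadd_eq_add] using congrArg (fun u => u - p₀) h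
        exact h0b (this ▸ hy)
    have himg : (· -ᵥ p₀) '' ((T : Set (Fin n → ℝ)) \ {p₀}) = b := by
      rw [hTdiff, ← Set.image_comp]
      simp [Function.comp, vadd_vsub]
    have hTa : AffineIndependent ℝ (Subtype.val : {x // x ∈ (T : Set (Fin n → ℝ))} → (Fin n → ℝ)) := by
      rw [affineIndependent_set_iff_linearIndependent_vsub ℝ (Finset.mem_coe.mpr hp₀T), himg]
      exact hbli
    have hTspan : affineSpan ℝ (T : Set (Fin n → ℝ)) = ⊤ := by
      refine (AffineSubspace.affineSpan_eq_top_iff_vectorSpan_eq_top_of_nonempty ℝ (Fin n → ℝ)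
        (Fin n → ℝ) (s := (T : Set (Fin n → ℝ))) ⟨p₀, Finset.mem_coe.mpr hp₀T⟩).mpr ?_
      rw [vectorSpan_eq_span_vsub_set_right_ne ℝ (Finset.mem_coe.mpr hp₀T), himg]
      exact hbspan
    have hTcard : T.card = n + 1 := by
      rw [hT_def, Finset.card_insert_of_notMem hp₀nimg,
        Finset.card_image_of_injective _ (fun x y h => by simpa [vadd_eq_add] using congrArg (fun u => u - p₀) h),
        hbcard]
    have hTlat : ∀ v ∈ T, v ∈ latticePts n := fun v hv => hSlat (hTS hv)
    have hTP : (T : Set (Fin n → ℝ)) ⊆ P := fun v hv => hSP (hTS hv)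
    -- weights on T
    set lam : (Fin n → ℝ) → ℝ := fun v => if v ∈ t then w v else 0 with hlam_def
    have hlam0 : ∀ v ∈ T, 0 ≤ lam v := by
      intro v _
      by_cases h : v ∈ t <;> simp [hlam_def, h]
      exact hw0 v h
    have hlamsum : ∑ v ∈ T, lam v = 1 := by
      rw [hlam_def]
      rw [Finset.sum_ite_mem, Finset.inter_eq_right.mpr htT, hw1]
    have hqT : ∑ v ∈ T, lam v • v = q := by
      have h1 : ∑ v ∈ T, lam v • v = ∑ v ∈ T, (if v ∈ t then w v • v else 0) :=
        Finset.sum_congr rfl (fun v _ => by by_cases h : v ∈ t <;> simp [hlam_def, h])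
      rw [h1, Finset.sum_ite_mem, Finset.inter_eq_right.mpr htT, hwq]
    -- the scaled weights
    set μ : (Fin n → ℝ) → ℝ := fun v => (c : ℝ) * lam v with hμ_def
    have hzsum : z = ∑ v ∈ T, μ v • v := by
      have : z = (c : ℝ) • q := hqz.symm
      rw [this, ← hqT, Finset.smul_sum]
      exact Finset.sum_congr rfl fun v _ => by rw [smul_smul]
    have hμ0 : ∀ v ∈ T, 0 ≤ μ v := fun v hv => mul_nonneg (Nat.cast_nonneg c) (hlam0 v hv)
    have hμsum : ∑ v ∈ T, μ v = (c : ℝ) := by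
      rw [hμ_def, ← Finset.mul_sum, hlamsum, mul_one]
    set M : (Fin n → ℝ) → ℕ := fun v => (⌊μ v⌋).toNat with hM_def
    have hMle : ∀ v ∈ T, (M v : ℝ) ≤ μ v := by
      intro v hv
      have h0 : (0:ℤ) ≤ ⌊μ v⌋ := Int.floor_nonneg.mpr (hμ0 v hv)
      have : ((M v : ℤ) : ℝ) ≤ μ v := by
        rw [hM_def, Int.toNat_of_nonneg h0]
        exact Int.floor_le _
      exact_mod_cast this
    have hMgt : ∀ v ∈ T, μ v < M v + 1 := by
      intro v hv
      have h0 : (0:ℤ) ≤ ⌊μ v⌋ := Int.floor_nonneg.mpr (hμ0 v hv)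
      have : μ v < ((M v : ℤ) : ℝ) + 1 := by
        rw [hM_def, Int.toNat_of_nonneg h0]
        exact Int.lt_floor_add_one _
      exact_mod_cast this
    have hMsum_le : ∑ v ∈ T, M v ≤ c := by
      have h1 : ((∑ v ∈ T, M v : ℕ) : ℝ) ≤ (c : ℝ) := by
        push_cast
        calc ∑ v ∈ T, (M v : ℝ) ≤ ∑ v ∈ T, μ v := Finset.sum_le_sum hMle
        _ = (c : ℝ) := hμsum
      exact_mod_cast h1
    set F : ℕ := c - ∑ v ∈ T, M v with hF_def
    have hMF : ∑ v ∈ T, M v = c - F := by omega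
    have hFsum : (F : ℝ) = ∑ v ∈ T, (μ v - (M v : ℝ)) := by
      rw [Finset.sum_sub_distrib, hμsum, hF_def, Nat.cast_sub hMsum_le]
      push_cast
      ring
    have hFn : F ≤ n := by
      have h1 : (F : ℝ) < (n : ℝ) + 1 := by
        rw [hFsum]
        calc ∑ v ∈ T, (μ v - (M v : ℝ)) < ∑ v ∈ T, (1 : ℝ) :=
              Finset.sum_lt_sum_of_nonempty ⟨p₀, hp₀T⟩ (fun v hv => by linarith [hMgt v hv])
        _ = T.card := by simp
        _ = (n : ℝ) + 1 := by rw [hTcard]; push_cast; ring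
      have : F < n + 1 := by exact_mod_cast h1
      omega
    have hrlat : z - ∑ v ∈ T, (M v : ℝ) • v ∈ latticePts n :=
      latticePts_sub hzlat (latticePts_sum T _ (fun v hv => latticePts_natSmul (M v) (hTlat v hv)))
    have hcR : (c : ℝ) = ((m : ℝ) + 1) * (ℓ : ℝ) := by rw [hc_def]; push_cast; ring
    by_cases hcase : F ≤ ℓ
    · -- good case
      obtain ⟨cc, hccle, hccsum⟩ := exists_subweight T M (ℓ - F) (by omega)
      have hccsumR : ∑ v ∈ T, (cc v : ℝ) = ((ℓ : ℝ) - (F : ℝ)) := by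
        have := congrArg (fun u : ℕ => (u : ℝ)) hccsum
        push_cast at this
        rw [this, Nat.cast_sub hcase]
      have hMsumR : ∑ v ∈ T, (M v : ℝ) = (c : ℝ) - (F : ℝ) := by
        have h2 : ∑ v ∈ T, (μ v - (M v : ℝ)) = ∑ v ∈ T, μ v - ∑ v ∈ T, (M v:ℝ) :=
          Finset.sum_sub_distrib _ _
        rw [← hFsum, hμsum] at h2
        linarith
      set y : Fin n → ℝ := ∑ v ∈ T, ((μ v - (M v : ℝ)) + (cc v : ℝ)) • v with hy_def
      have hysum : ∑ v ∈ T, ((μ v - (M v : ℝ)) + (cc v : ℝ)) = (ℓ : ℝ) := by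
        rw [Finset.sum_add_distrib, ← hFsum, hccsumR]; ring
      have hymem : y ∈ ((ℓ : ℕ) : ℝ) • P :=
        sum_mem_dilate hPc hTP
          (fun v hv => add_nonneg (by linarith [hMle v hv]) (Nat.cast_nonneg _))
          (by exact_mod_cast Nat.pos_of_ne_zero (by omega)) hysum
      have hylat : y ∈ latticePts n := by
        have hy2 : y = (z - ∑ v ∈ T, (M v : ℝ) • v) + ∑ v ∈ T, (cc v : ℝ) • v := by
          rw [hy_def, hzsum, ← Finset.sum_sub_distrib, ← Finset.sum_add_distrib]
          exact Finset.sum_congr rfl fun v _ => by rw [add_smul, sub_smul]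
        rw [hy2]
        exact latticePts_add hrlat
          (latticePts_sum _ _ fun v hv => latticePts_natSmul _ (hTlat v hv))
      set x : Fin n → ℝ := ∑ v ∈ T, ((M v : ℝ) - (cc v : ℝ)) • v with hx_def
      have hxsum : ∑ v ∈ T, ((M v : ℝ) - (cc v : ℝ)) = ((m * ℓ : ℕ) : ℝ) := by
        rw [Finset.sum_sub_distrib, hMsumR, hccsumR, hcR]
        push_cast
        ring
      have hmℓpos : (0 : ℝ) < ((m * ℓ : ℕ) : ℝ) := by
        have : 0 < m * ℓ := Nat.mul_pos (by omega) (by omega)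
        exact_mod_cast this
      have hxmem : x ∈ ((m * ℓ : ℕ) : ℝ) • P :=
        sum_mem_dilate hPc hTP
          (fun v hv => sub_nonneg.mpr (by exact_mod_cast hccle v)) hmℓpos hxsum
      have hxlat : x ∈ latticePts n := by
        refine latticePts_sum _ _ fun v hv => ?_
        have h3 : ((M v : ℝ) - (cc v : ℝ)) = (((M v : ℤ) - (cc v : ℤ) : ℤ) : ℝ) := by
          push_cast; ring
        rw [h3]
        exact latticePts_intSmul _ (hTlat v hv)
      have hzxy : z = x + y := by
        rw [hzsum, hx_def, hy_def, ← Finset.sum_add_distrib]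
        refine Finset.sum_congr rfl fun v _ => ?_
        rw [← add_smul]
        congr 1
        ring
      rw [hzxy]
      exact Set.add_mem_add ⟨hxmem, hxlat⟩ ⟨hymem, hylat⟩
    · -- bad case: derive a contradiction
      exfalso
      push_neg at hcase
      set g : ℕ := n + 1 - F with hg_def
      have hg1 : 1 ≤ g := by omega
      have hgk : g ≤ k := by omega
      have hk1 : 1 ≤ k := le_trans hg1 hgk
      have hkpos : (0 : ℝ) < (k : ℝ) := by exact_mod_cast hk1
      set ν : (Fin n → ℝ) → ℝ :=
        fun v => (1 - (μ v - (M v : ℝ))) + (if v = p₀ then ((k - g : ℕ) : ℝ) else 0) with hν_def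
      have hν0 : ∀ v ∈ T, 0 < ν v := by
        intro v hv
        have h1 : μ v - (M v : ℝ) < 1 := by linarith [hMgt v hv]
        have h2 : (0:ℝ) ≤ (if v = p₀ then ((k - g : ℕ) : ℝ) else 0) := by split <;> positivity
        rw [hν_def]; dsimp only; linarith
      have hνsum : ∑ v ∈ T, ν v = (k : ℝ) := by
        have h1 : ∑ v ∈ T, (1 - (μ v - (M v : ℝ))) = ((n : ℝ) + 1) - (F : ℝ) := by
          rw [Finset.sum_sub_distrib, ← hFsum, Finset.sum_const, hTcard, nsmul_eq_mul]
          push_cast; ring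
        have h2 : ∑ v ∈ T, (if v = p₀ then ((k - g : ℕ) : ℝ) else 0) = ((k - g : ℕ) : ℝ) := by
          rw [Finset.sum_ite_eq' T p₀ (fun _ => ((k - g : ℕ) : ℝ)), if_pos hp₀T]
        have hgR : (g : ℝ) = (n : ℝ) + 1 - (F : ℝ) := by
          rw [hg_def, Nat.cast_sub (by omega)]; push_cast; ring
        rw [hν_def, Finset.sum_add_distrib, h1, h2, Nat.cast_sub hgk, hgR]
        ring
      set wstar : Fin n → ℝ := ∑ v ∈ T, ν v • v with hw_def
      have hwlat : wstar ∈ latticePts n := by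
        have hsplit : wstar = (∑ v ∈ T, (1 - (μ v - (M v : ℝ))) • v)
            + (∑ v ∈ T, (if v = p₀ then ((k - g : ℕ) : ℝ) else 0) • v) := by
          rw [hw_def, ← Finset.sum_add_distrib]
          exact Finset.sum_congr rfl fun v _ => by rw [hν_def, add_smul]
        have hpart1 : ∑ v ∈ T, (1 - (μ v - (M v : ℝ))) • v
            = (∑ v ∈ T, v) - (z - ∑ v ∈ T, (M v : ℝ) • v) := by
          rw [hzsum, ← Finset.sum_sub_distrib, ← Finset.sum_sub_distrib]
          refine Finset.sum_congr rfl fun v _ => ?_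
          rw [sub_smul, one_smul, sub_smul]
        have hpart2 : ∑ v ∈ T, (if v = p₀ then ((k - g : ℕ) : ℝ) else 0) • v
            = ((k - g : ℕ) : ℝ) • p₀ := by
          have h6 : ∀ v ∈ T, (if v = p₀ then ((k - g : ℕ) : ℝ) else 0) • v
              = (if v = p₀ then ((k - g : ℕ) : ℝ) • v else 0) := by
            intro v _; split <;> simp
          rw [Finset.sum_congr rfl h6,
            Finset.sum_ite_eq' T p₀ (fun v => ((k - g : ℕ) : ℝ) • v), if_pos hp₀T]
        rw [hsplit, hpart1, hpart2]
        exact latticePts_add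
          (latticePts_sub (latticePts_sum T _ (fun v hv => hTlat v hv)) hrlat)
          (latticePts_natSmul _ (hTlat p₀ hp₀T))
      -- wstar is an interior lattice point of k • P
      let bb : AffineBasis {v // v ∈ T} ℝ (Fin n → ℝ) :=
        ⟨Subtype.val, hTa, by rw [Subtype.range_coe_subtype]; exact hTspan⟩
      have hν'sum : ∑ i : {v // v ∈ T}, ν (i : Fin n → ℝ) / (k : ℝ) = 1 := by
        rw [← Finset.sum_div, Finset.sum_coe_sort T ν, hνsum, div_self hkpos.ne']
      have hcomb : Finset.univ.affineCombination ℝ (⇑bb)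
          (fun i : {v // v ∈ T} => ν (i : Fin n → ℝ) / (k : ℝ)) = (k : ℝ)⁻¹ • wstar := by
        rw [Finset.affineCombination_eq_linear_combination _ _ _ hν'sum]
        rw [hw_def, Finset.smul_sum,
          ← Finset.sum_coe_sort T (fun v => (k : ℝ)⁻¹ • (ν v • v))]
        exact Finset.sum_congr rfl fun i _ => by rw [smul_smul, div_eq_inv_mul]; rfl
      have hcoord : ∀ i, 0 < bb.coord i ((k : ℝ)⁻¹ • wstar) := by
        intro i
        rw [← hcomb,
          AffineBasis.coord_apply_combination_of_mem bb (Finset.mem_univ i) hν'sum]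
        exact div_pos (hν0 i i.2) hkpos
      have hint : (k : ℝ)⁻¹ • wstar ∈ interior P := by
        have h4 : (k : ℝ)⁻¹ • wstar ∈ interior (convexHull ℝ (Set.range ⇑bb)) := by
          rw [AffineBasis.interior_convexHull]
          exact hcoord
        have h5 : convexHull ℝ (Set.range ⇑bb) ⊆ P := by
          rw [show Set.range ⇑bb = (T : Set (Fin n → ℝ)) from Subtype.range_coe_subtype]
          rw [hP]
          exact convexHull_mono hTS
        exact interior_mono h5 h4
      have hwk : wstar ∈ interior ((k : ℝ) • P) := by
        rw [interior_smul₀ (ne_of_gt hkpos) P]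
        exact ⟨(k : ℝ)⁻¹ • wstar, hint,
          show (k : ℝ) • ((k : ℝ)⁻¹ • wstar) = wstar by rw [smul_inv_smul₀ hkpos.ne']⟩
      exact hk wstar hwk hwlat
  · -- easy direction
    rintro z ⟨x, ⟨hxP, hxlat⟩, y, ⟨hyP, hylat⟩, rfl⟩
    refine ⟨?_, latticePts_add hxlat hylat⟩
    obtain ⟨p, hp, rfl⟩ := hxP
    obtain ⟨q, hq, rfl⟩ := hyP
    have hc0 : (0 : ℝ) < (((m + 1) * ℓ : ℕ) : ℝ) := by
      have : 0 < (m + 1) * ℓ := Nat.mul_pos (by omega) (by omega)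
      exact_mod_cast this
    set a : ℝ := ((m * ℓ : ℕ) : ℝ)
    set bb : ℝ := ((ℓ : ℕ) : ℝ)
    set cc : ℝ := (((m + 1) * ℓ : ℕ) : ℝ)
    have hab : a + bb = cc := by simp only [a, bb, cc]; push_cast; ring
    have ha0 : 0 ≤ a := by positivity
    have hb0 : 0 ≤ bb := by positivity
    refine ⟨(a / cc) • p + (bb / cc) • q, hPc hp hq (by positivity) (by positivity) ?_, ?_⟩
    · rw [← add_div, hab, div_self hc0.ne']
    · show cc • ((a / cc) • p + (bb / cc) • q) = a • p + bb • q
      rw [smul_add, smul_smul, smul_smul, mul_div_cancel₀ _ hc0.ne', mul_div_cancel₀ _ hc0.ne']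
end

section
/- Let n ≥ 2 and let P ⊆ ℝ^n be a full-dimensional lattice polytope whose interior contains no lattice point. Then for every integer ℓ ≥ n − 1, the dilate ℓP is normal: for every integer m ≥ 1, every lattice point of m(ℓP) is a sum of m lattice points of ℓP. (Special case k = 1 of the paper's Corollary 1.4.) -/
open Pointwise

lemma latticePts_sum_s3 {n : ℕ} {ι : Type*} [Fintype ι] (f : ι → Fin n → ℝ)
    (h : ∀ i, f i ∈ latticePts n) : (∑ i, f i) ∈ latticePts n := by
  classical
  intro j
  have : ∀ s : Finset ι, ∃ z : ℤ, (∑ i ∈ s, f i) j = (z : ℝ) := by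
    intro s
    induction s using Finset.induction with
    | empty => exact ⟨0, by simp⟩
    | @insert a s' hnotmem ih =>
      obtain ⟨z, hz⟩ := ih
      obtain ⟨b, hb⟩ := h a j
      refine ⟨b + z, ?_⟩
      rw [Finset.sum_insert hnotmem, Pi.add_apply, hb, hz]
      push_cast
      ring
  exact this Finset.univ

/-- Key peeling lemma: if `P = conv S` is hollow, `t ≥ n`, and `z` is a lattice point of `tP`,
then we can peel off one lattice point of `S`, leaving a lattice point of `(t-1)P`. -/
lemma peel_one (n : ℕ) (hn : 2 ≤ n) (S : Finset (Fin n → ℝ))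
    (hSlat : (S : Set (Fin n → ℝ)) ⊆ latticePts n)
    (hk : ∀ x ∈ interior (convexHull ℝ (S : Set (Fin n → ℝ))), x ∉ latticePts n)
    (t : ℕ) (ht : n ≤ t) (z : Fin n → ℝ)
    (hz : z ∈ (t : ℝ) • convexHull ℝ (S : Set (Fin n → ℝ))) (hzl : z ∈ latticePts n) :
    ∃ v ∈ (S : Set (Fin n → ℝ)),
      z - v ∈ ((t : ℝ) - 1) • convexHull ℝ (S : Set (Fin n → ℝ)) ∧ z - v ∈ latticePts n := by
  classical
  have ht2 : 2 ≤ t := le_trans hn ht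
  have htR : (0 : ℝ) < (t : ℝ) := by exact_mod_cast (by omega : 0 < t)
  have htne : (t : ℝ) ≠ 0 := ne_of_gt htR
  rw [Set.mem_smul_set_iff_inv_smul_mem₀ htne] at hz
  obtain ⟨ι, hfin, v, w, hvS, hai, hw0, hw1, hwy⟩ :=
    eq_pos_convex_span_of_mem_convexHull hz
  set lam : ι → ℝ := fun i => (t : ℝ) * w i with hlam
  have hz_eq : z = ∑ i, lam i • v i := by
    have : (t : ℝ) • ((t : ℝ)⁻¹ • z) = z := by
      rw [smul_smul, mul_inv_cancel₀ htne, one_smul]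
    rw [← this, ← hwy, Finset.smul_sum]
    simp only [smul_smul, hlam]
  have hsum : ∑ i, lam i = (t : ℝ) := by
    simp only [hlam, ← Finset.mul_sum, hw1, mul_one]
  by_cases hcase : ∃ i, 1 ≤ lam i
  · obtain ⟨i0, hi0⟩ := hcase
    have hvmem : v i0 ∈ (S : Set (Fin n → ℝ)) := hvS ⟨i0, rfl⟩
    refine ⟨v i0, hvmem, ?_, latticePts_sub hzl (hSlat hvmem)⟩
    have ht1 : (0 : ℝ) < (t : ℝ) - 1 := by
      have : (2 : ℝ) ≤ (t : ℝ) := by exact_mod_cast ht2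
      linarith
    rw [Set.mem_smul_set_iff_inv_smul_mem₀ (ne_of_gt ht1)]
    have hdiff : z - v i0 = ∑ i, (lam i - if i = i0 then 1 else 0) • v i := by
      simp only [sub_smul, Finset.sum_sub_distrib, ← hz_eq]
      congr 1
      rw [Finset.sum_congr rfl (fun i _ => by rw [ite_smul, one_smul, zero_smul])]
      simp [Finset.sum_ite_eq]
    rw [hdiff, Finset.smul_sum]
    simp only [smul_smul]
    apply Convex.sum_mem (convex_convexHull ℝ _)
    · intro i _
      by_cases h : i = i0
      · subst h
        simp only [if_pos rfl]
        have : 0 ≤ lam i - 1 := by linarith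
        positivity
      · simp only [if_neg h, sub_zero]
        have : 0 < lam i := mul_pos htR (hw0 i)
        positivity
    · rw [← Finset.mul_sum, Finset.sum_sub_distrib, hsum]
      simp [Finset.sum_ite_eq]
      field_simp
    · intro i _
      exact subset_convexHull ℝ _ (hvS ⟨i, rfl⟩)
  · push_neg at hcase
    exfalso
    -- all λᵢ < 1; then t = n, card ι = n + 1, and we produce an interior lattice point
    have hne : Nonempty ι := by
      by_contra h
      rw [not_nonempty_iff] at h
      rw [Finset.univ_eq_empty, Finset.sum_empty] at hsum
      exact htne hsum.symm
    have hcard_le : Fintype.card ι ≤ n + 1 := by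
      have h1 := hai.card_le_finrank_succ
      have h2 : Module.finrank ℝ (vectorSpan ℝ (Set.range v)) ≤ n := by
        have := Submodule.finrank_le (vectorSpan ℝ (Set.range v))
        rwa [Module.finrank_fin_fun] at this
      omega
    have hlt : (t : ℝ) < Fintype.card ι := by
      calc (t : ℝ) = ∑ i, lam i := hsum.symm
        _ < ∑ _i : ι, (1 : ℝ) :=
            Finset.sum_lt_sum_of_nonempty Finset.univ_nonempty (fun i _ => hcase i)
        _ = Fintype.card ι := by simp
    have hltN : t < Fintype.card ι := by exact_mod_cast hlt
    have hcard : Fintype.card ι = n + 1 := by omega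
    have htn : t = n := by omega
    -- affine basis
    have htot : affineSpan ℝ (Set.range v) = ⊤ := by
      rw [hai.affineSpan_eq_top_iff_card_eq_finrank_add_one, hcard, Module.finrank_fin_fun]
    let b : AffineBasis ι ℝ (Fin n → ℝ) := ⟨v, hai, htot⟩
    set mu : ι → ℝ := fun i => 1 - lam i with hmu
    have hmusum : ∑ i, mu i = 1 := by
      simp only [hmu, Finset.sum_sub_distrib, hsum]
      rw [Finset.sum_const, Finset.card_univ, hcard, htn]
      push_cast
      ring
    set p : Fin n → ℝ := ∑ i, mu i • v i with hp
    have hpcomb : p = Finset.univ.affineCombination ℝ v mu := by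
      rw [Finset.affineCombination_eq_linear_combination _ _ _ hmusum]
    have hcoord : ∀ i, b.coord i p = mu i := by
      intro i
      rw [hpcomb]
      exact b.coord_apply_combination_of_mem (Finset.mem_univ i) hmusum
    have hpint : p ∈ interior (convexHull ℝ (Set.range v)) := by
      have : interior (convexHull ℝ (Set.range ⇑b)) = {x | ∀ i, 0 < b.coord i x} :=
        b.interior_convexHull
      have hrange : Set.range ⇑b = Set.range v := rfl
      rw [hrange] at this
      rw [this]
      intro i
      rw [hcoord i]
      simp only [hmu]
      linarith [hcase i]
    have hpint' : p ∈ interior (convexHull ℝ (S : Set (Fin n → ℝ))) :=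
      interior_mono (convexHull_mono hvS) hpint
    have hplat : p ∈ latticePts n := by
      have hpeq : p = (∑ i, v i) - z := by
        simp only [hp, hmu, sub_smul, one_smul, Finset.sum_sub_distrib, ← hz_eq]
      rw [hpeq]
      exact latticePts_sub (latticePts_sum_s3 v (fun i => hSlat (hvS ⟨i, rfl⟩))) hzl
    exact hk p hpint' hplat

/-- Peeling `j` lattice points of `S` off a lattice point of `tP`, provided `n + j ≤ t + 1`. -/
lemma peel_many (n : ℕ) (hn : 2 ≤ n) (S : Finset (Fin n → ℝ))
    (hSlat : (S : Set (Fin n → ℝ)) ⊆ latticePts n)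
    (hk : ∀ x ∈ interior (convexHull ℝ (S : Set (Fin n → ℝ))), x ∉ latticePts n) :
    ∀ (j t : ℕ), n + j ≤ t + 1 → ∀ z : Fin n → ℝ,
      z ∈ (t : ℝ) • convexHull ℝ (S : Set (Fin n → ℝ)) → z ∈ latticePts n →
      ∃ g : Fin j → (Fin n → ℝ), (∀ i, g i ∈ (S : Set (Fin n → ℝ))) ∧
        z - ∑ i, g i ∈ ((t - j : ℕ) : ℝ) • convexHull ℝ (S : Set (Fin n → ℝ)) ∧
        z - ∑ i, g i ∈ latticePts n := by
  intro j
  induction j with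
  | zero =>
    intro t _ z hz hzl
    exact ⟨![], fun i => i.elim0, by simpa using hz, by simpa using hzl⟩
  | succ j ih =>
    intro t hjt z hz hzl
    have htn : n ≤ t := by omega
    have ht1 : 1 ≤ t := by omega
    obtain ⟨v, hvS, hv1, hv2⟩ := peel_one n hn S hSlat hk t htn z hz hzl
    have hcast : ((t - 1 : ℕ) : ℝ) = (t : ℝ) - 1 := by
      rw [Nat.cast_sub ht1]; norm_num
    rw [← hcast] at hv1
    obtain ⟨g, hgS, hg1, hg2⟩ := ih (t - 1) (by omega) (z - v) hv1 hv2
    refine ⟨Fin.cons v g, ?_, ?_, ?_⟩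
    · intro i
      refine Fin.cases ?_ ?_ i
      · simpa using hvS
      · intro i'; simpa using hgS i'
    · have hsum : z - ∑ i, (Fin.cons v g : Fin (j + 1) → Fin n → ℝ) i
          = (z - v) - ∑ i, g i := by
        rw [Fin.sum_cons]; abel
      rw [hsum]
      have : t - 1 - j = t - (j + 1) := by omega
      rwa [this] at hg1
    · have hsum : z - ∑ i, (Fin.cons v g : Fin (j + 1) → Fin n → ℝ) i
          = (z - v) - ∑ i, g i := by
        rw [Fin.sum_cons]; abel
      rw [hsum]
      exact hg2

/-- Special case `k = 1` of Corollary 1.4: if `P ⊆ ℝ^n` (`n ≥ 2`) is a full-dimensional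
lattice polytope whose interior contains no lattice point, then `ℓP` is normal for every
`ℓ ≥ n - 1`. -/
theorem dilate_is_normal_of_no_interior_lattice_point
    (n : ℕ) (hn : 2 ≤ n)
    (S : Finset (Fin n → ℝ)) (hS : S.Nonempty)
    (hSlat : (S : Set (Fin n → ℝ)) ⊆ latticePts n)
    (P : Set (Fin n → ℝ)) (hP : P = convexHull ℝ (S : Set (Fin n → ℝ)))
    (hPfull : (interior P).Nonempty)
    (hk : ∀ x ∈ interior P, x ∉ latticePts n)
    (ℓ : ℕ) (hℓ : n - 1 ≤ ℓ) :
    ∀ m : ℕ, 1 ≤ m →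
      ∀ x ∈ ((m : ℝ) • ((ℓ : ℝ) • P)) ∩ latticePts n,
        ∃ f : Fin m → (Fin n → ℝ),
          (∀ i, f i ∈ ((ℓ : ℝ) • P) ∩ latticePts n) ∧ x = ∑ i, f i := by
  subst hP
  have hℓ1 : 1 ≤ ℓ := by omega
  have hℓR : ((ℓ : ℝ)) ≠ 0 := by exact_mod_cast (by omega : ℓ ≠ 0)
  -- restate dilate membership via natural number products
  have key : ∀ m : ℕ, 1 ≤ m →
      ∀ x : Fin n → ℝ, x ∈ ((m * ℓ : ℕ) : ℝ) • convexHull ℝ (S : Set (Fin n → ℝ)) →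
        x ∈ latticePts n →
        ∃ f : Fin m → (Fin n → ℝ),
          (∀ i, f i ∈ ((ℓ : ℝ) • convexHull ℝ (S : Set (Fin n → ℝ))) ∩ latticePts n) ∧
            x = ∑ i, f i := by
    intro m hm
    induction m with
    | zero => omega
    | succ m ih =>
      by_cases hm1 : m = 0
      · subst hm1
        intro x hx hxl
        refine ⟨fun _ => x, fun i => ⟨?_, hxl⟩, by simp⟩
        simpa using hx
      · intro x hx hxl
        have hm' : 1 ≤ m := by omega
        -- peel ℓ points
        have hbound : n + ℓ ≤ (m + 1) * ℓ + 1 := by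
          have h2 : 2 * ℓ ≤ (m + 1) * ℓ := Nat.mul_le_mul_right ℓ (by omega)
          omega
        obtain ⟨g, hgS, hg1, hg2⟩ :=
          peel_many n hn S hSlat hk ℓ ((m + 1) * ℓ) hbound x hx hxl
        have hsub : (m + 1) * ℓ - ℓ = m * ℓ := by
          rw [Nat.succ_mul]; omega
        rw [hsub] at hg1
        obtain ⟨f', hf', hf'sum⟩ := ih hm' (x - ∑ i, g i) hg1 hg2
        set w : Fin n → ℝ := ∑ i, g i with hw
        have hwP : w ∈ (ℓ : ℝ) • convexHull ℝ (S : Set (Fin n → ℝ)) := by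
          rw [Set.mem_smul_set_iff_inv_smul_mem₀ hℓR, hw, Finset.smul_sum]
          apply Convex.sum_mem (convex_convexHull ℝ _)
          · intro i _; positivity
          · rw [Finset.sum_const, Finset.card_univ, Fintype.card_fin]
            rw [nsmul_eq_mul]
            field_simp
          · intro i _
            exact subset_convexHull ℝ _ (hgS i)
        have hwlat : w ∈ latticePts n := latticePts_sum_s3 g (fun i => hSlat (hgS i))
        refine ⟨Fin.cons w f', ?_, ?_⟩
        · intro i
          refine Fin.cases ?_ ?_ i
          · exact ⟨hwP, hwlat⟩
          · intro i'; simpa using hf' i'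
        · rw [Fin.sum_cons, ← hf'sum]
          abel
  intro m hm x hx
  obtain ⟨hx1, hx2⟩ := hx
  rw [smul_smul] at hx1
  have : ((m : ℝ) * (ℓ : ℝ)) = ((m * ℓ : ℕ) : ℝ) := by push_cast; ring
  rw [this] at hx1
  exact key m hm x hx1 hx2
end

section
/- Let n ≥ 2 and let P ⊆ ℝ^n be a full-dimensional lattice polytope such that the dilate (n−1)P contains no lattice point in its interior. Then P itself is normal: for every integer m ≥ 1, every lattice point of mP is a sum of m lattice points of P. (Special case k = n − 1, ℓ = 1 of the paper's Corollary 1.4.) -/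
open Pointwise

namespace NormalAux

open AffineSubspace

variable {n : ℕ}

lemma lat_zero : (0 : Fin n → ℝ) ∈ latticePts n := fun _ => ⟨0, by simp⟩

lemma lat_add {x y : Fin n → ℝ} (hx : x ∈ latticePts n) (hy : y ∈ latticePts n) :
    x + y ∈ latticePts n := fun i => by
  obtain ⟨a, ha⟩ := hx i; obtain ⟨b, hb⟩ := hy i
  exact ⟨a + b, by simp [ha, hb]⟩

lemma lat_zsmul {x : Fin n → ℝ} (hx : x ∈ latticePts n) (c : ℤ) :
    (c : ℝ) • x ∈ latticePts n := fun i => by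
  obtain ⟨a, ha⟩ := hx i
  refine ⟨c * a, ?_⟩
  simp only [Pi.smul_apply, smul_eq_mul, ha]
  push_cast; ring

lemma lat_neg {x : Fin n → ℝ} (hx : x ∈ latticePts n) : -x ∈ latticePts n := by
  have := lat_zsmul hx (-1); simpa using this

lemma lat_sub {x y : Fin n → ℝ} (hx : x ∈ latticePts n) (hy : y ∈ latticePts n) :
    x - y ∈ latticePts n := by
  have := lat_add hx (lat_neg hy); simpa [sub_eq_add_neg] using this

lemma lat_sum {ι : Type*} (s : Finset ι) (f : ι → Fin n → ℝ)
    (hf : ∀ i ∈ s, f i ∈ latticePts n) : (∑ i ∈ s, f i) ∈ latticePts n := by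
  classical
  induction s using Finset.induction with
  | empty => simpa using (lat_zero (n := n))
  | @insert a s ha ih =>
      rw [Finset.sum_insert ha]
      exact lat_add (hf _ (Finset.mem_insert_self _ _))
        (ih fun i hi => hf i (Finset.mem_insert_of_mem hi))

lemma sum_split {α β : Type*} [DecidableEq α] [AddCommMonoid β] {I J : Finset α} (hIJ : I ⊆ J)
    (f : α → β) : ∑ v ∈ J, f v = ∑ v ∈ I, f v + ∑ v ∈ J \ I, f v := by
  rw [← Finset.sum_union Finset.disjoint_sdiff, Finset.union_sdiff_of_subset hIJ]

/-- Extend an affinely independent finite subset of `S` to an affinely independent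
subset of `S` whose affine span is everything. -/
lemma exists_extension (S : Finset (Fin n → ℝ))
    (hspan : affineSpan ℝ (S : Set (Fin n → ℝ)) = ⊤)
    (I : Finset (Fin n → ℝ)) (hIS : (I : Set (Fin n → ℝ)) ⊆ (S : Set (Fin n → ℝ)))
    (v₀ : Fin n → ℝ) (hv₀ : v₀ ∈ I)
    (hInd : AffineIndependent ℝ (Subtype.val : ↥(I : Set (Fin n → ℝ)) → (Fin n → ℝ))) :
    ∃ J : Finset (Fin n → ℝ), I ⊆ J ∧ (J : Set (Fin n → ℝ)) ⊆ (S : Set (Fin n → ℝ)) ∧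
      AffineIndependent ℝ (Subtype.val : ↥(J : Set (Fin n → ℝ)) → (Fin n → ℝ)) ∧
      affineSpan ℝ (J : Set (Fin n → ℝ)) = ⊤ := by
  classical
  have hv₀S : v₀ ∈ (S : Set (Fin n → ℝ)) := hIS (by simpa using hv₀)
  set s : Set (Fin n → ℝ) := (fun p => p - v₀) '' ((I : Set (Fin n → ℝ)) \ {v₀}) with hs_def
  set t : Set (Fin n → ℝ) := (fun p => p - v₀) '' ((S : Set (Fin n → ℝ)) \ {v₀}) with ht_def
  have hst : s ⊆ t := Set.image_mono (Set.diff_subset_diff_left hIS)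
  have hs_li : LinearIndependent ℝ ((↑) : s → (Fin n → ℝ)) := by
    have := (affineIndependent_set_iff_linearIndependent_vsub ℝ
      (s := (I : Set (Fin n → ℝ))) (p₁ := v₀) (by simpa using hv₀)).mp hInd
    simpa [hs_def, vsub_eq_sub] using this
  have ht_span : Submodule.span ℝ t = ⊤ := by
    have h1 : vectorSpan ℝ (S : Set (Fin n → ℝ)) = ⊤ :=
      AffineSubspace.vectorSpan_eq_top_of_affineSpan_eq_top ℝ _ _ hspan
    have h2 := vectorSpan_eq_span_vsub_set_right_ne ℝ (s := (S : Set (Fin n → ℝ)))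
      (p := v₀) hv₀S
    rw [h1] at h2
    rw [ht_def]
    simpa [vsub_eq_sub] using h2.symm
  let b : Set (Fin n → ℝ) := (show LinearIndepOn ℝ id s from hs_li).extend hst
  have hbt : b ⊆ t := (show LinearIndepOn ℝ id s from hs_li).extend_subset hst
  have hsb : s ⊆ b := (show LinearIndepOn ℝ id s from hs_li).subset_extend hst
  have hb_span : Submodule.span ℝ b = ⊤ := by
    rw [(show LinearIndepOn ℝ id s from hs_li).span_extend_eq_span hst, ht_span]
  have hb_li : LinearIndependent ℝ ((↑) : b → (Fin n → ℝ)) := (show LinearIndepOn ℝ id s from hs_li).linearIndepOn_extend hst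
  have hb_ne : ∀ v ∈ b, v ≠ (0 : Fin n → ℝ) := by
    intro v hv hv0
    exact hb_li.ne_zero ⟨v, hv⟩ (by simpa using hv0)
  set Jset : Set (Fin n → ℝ) := {v₀} ∪ (fun v => v + v₀) '' b with hJset_def
  have hJ_ind : AffineIndependent ℝ ((↑) : Jset → (Fin n → ℝ)) := by
    have := (linearIndependent_set_iff_affineIndependent_vadd_union_singleton ℝ hb_ne v₀).mp hb_li
    rw [hJset_def]
    simpa [vadd_eq_add] using this
  have hJ_sub : Jset ⊆ (S : Set (Fin n → ℝ)) := by
    rintro x (hx | ⟨v, hv, rfl⟩)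
    · rwa [Set.mem_singleton_iff.mp hx]
    · obtain ⟨p, hp, hpv⟩ := hbt hv
      have hx : (fun v => v + v₀) ((fun p => p - v₀) p) = p := by
        simp
      rw [← hpv, hx]
      exact hp.1
  have hIJ : (I : Set (Fin n → ℝ)) ⊆ Jset := by
    intro x hx
    by_cases hxv : x = v₀
    · exact Or.inl (by simp [hxv])
    · refine Or.inr ⟨x - v₀, hsb ⟨x, ⟨hx, by simpa using hxv⟩, rfl⟩, by simp⟩
  have hv₀J : v₀ ∈ Jset := Or.inl rfl
  have hJ_span : affineSpan ℝ Jset = ⊤ := by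
    rw [affineSpan_eq_top_iff_vectorSpan_eq_top_of_nonempty ℝ (Fin n → ℝ) (Fin n → ℝ)
      ⟨v₀, hv₀J⟩]
    have h2 := vectorSpan_eq_span_vsub_set_right ℝ (s := Jset) (p := v₀) hv₀J
    have hb_sub : b ⊆ (fun p => p -ᵥ v₀) '' Jset := by
      intro v hv
      exact ⟨v + v₀, Or.inr ⟨v, hv, rfl⟩, by simp [vsub_eq_sub]⟩
    have hle : (⊤ : Submodule ℝ (Fin n → ℝ)) ≤
        Submodule.span ℝ ((fun p => p -ᵥ v₀) '' Jset) := by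
      rw [← hb_span]
      exact Submodule.span_mono hb_sub
    rw [h2, top_le_iff.mp hle]
  have hJ_fin : Jset.Finite := by
    apply Set.Finite.union (Set.finite_singleton _)
    exact Set.Finite.image _ (Set.Finite.subset (Set.Finite.image _
      (Set.Finite.diff S.finite_toSet)) hbt)
  refine ⟨hJ_fin.toFinset, ?_, ?_, ?_, ?_⟩
  · intro x hx
    have : x ∈ Jset := hIJ (by simpa using hx)
    simpa [Set.Finite.mem_toFinset] using this
  · intro x hx
    exact hJ_sub (by simpa [Set.Finite.mem_toFinset] using hx)
  · have hcoe : (hJ_fin.toFinset : Set (Fin n → ℝ)) = Jset := Set.Finite.coe_toFinset _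
    rw [hcoe]
    exact hJ_ind
  · have hcoe : (hJ_fin.toFinset : Set (Fin n → ℝ)) = Jset := Set.Finite.coe_toFinset _
    rw [hcoe]
    exact hJ_span

/-- Key lemma: a lattice point written with all barycentric weights strictly in `(0,1)`
on an affinely independent subset of `S`, with integral total weight `H`,
must satisfy `H ≥ |I| - 1`, otherwise we could exhibit a lattice point in the
interior of `(n-1) • P`. -/
lemma key (hn : 2 ≤ n) (S : Finset (Fin n → ℝ))
    (hSlat : (S : Set (Fin n → ℝ)) ⊆ latticePts n)
    (hspan : affineSpan ℝ (S : Set (Fin n → ℝ)) = ⊤)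
    (hk : ∀ x ∈ interior ((((n - 1 : ℕ)) : ℝ) • (convexHull ℝ (S : Set (Fin n → ℝ)))),
      x ∉ latticePts n)
    (I : Finset (Fin n → ℝ)) (v₀ : Fin n → ℝ) (hv₀ : v₀ ∈ I)
    (hIS : (I : Set (Fin n → ℝ)) ⊆ (S : Set (Fin n → ℝ)))
    (hInd : AffineIndependent ℝ (Subtype.val : ↥(I : Set (Fin n → ℝ)) → (Fin n → ℝ)))
    (μ : (Fin n → ℝ) → ℝ) (hμ0 : ∀ v ∈ I, 0 < μ v) (hμ1 : ∀ v ∈ I, μ v < 1)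
    (hw : (∑ v ∈ I, μ v • v) ∈ latticePts n)
    (H : ℤ) (hH : (H : ℝ) = ∑ v ∈ I, μ v) :
    (I.card : ℤ) - 1 ≤ H := by
  classical
  by_contra hcon
  push_neg at hcon
  have hpad : 0 ≤ (I.card : ℤ) - 2 - H := by omega
  have hpadR : (0:ℝ) ≤ (I.card : ℝ) - 2 - (H : ℝ) := by exact_mod_cast hpad
  obtain ⟨J, hIJ, hJS, hJind, hJspan⟩ := exists_extension S hspan I hIS v₀ hv₀ hInd
  have hv₀J : v₀ ∈ J := hIJ hv₀
  -- the affine basis given by J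
  let b : AffineBasis ↥(J : Set (Fin n → ℝ)) ℝ (Fin n → ℝ) :=
    ⟨Subtype.val, hJind, by rw [Subtype.range_coe]; exact hJspan⟩
  have hJcard : J.card = n + 1 := by
    have h1 : affineSpan ℝ (Set.range (Subtype.val : ↥(J : Set (Fin n → ℝ)) → (Fin n → ℝ)))
        = ⊤ := by rw [Subtype.range_coe]; exact hJspan
    have h2 := hJind.affineSpan_eq_top_iff_card_eq_finrank_add_one.mp h1
    have h3 : Fintype.card ↥(J : Set (Fin n → ℝ)) = J.card := Fintype.card_coe J
    rw [h3, Module.finrank_fintype_fun_eq_card, Fintype.card_fin] at h2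
    exact h2
  have hn1 : (0:ℝ) < (n:ℝ) - 1 := by
    have h2 : (2:ℝ) ≤ (n:ℝ) := by exact_mod_cast hn
    linarith
  -- the weights
  set c : (Fin n → ℝ) → ℝ := fun v =>
    (if v ∈ I then μ v else 1) + (if v = v₀ then ((I.card : ℝ) - 2 - (H:ℝ)) else 0)
    with hc_def
  have hcsum : ∑ v ∈ J, c v = (n : ℝ) - 1 := by
    rw [hc_def, Finset.sum_add_distrib]
    have h1 : ∑ v ∈ J, (if v ∈ I then μ v else 1)
        = (H : ℝ) + ((J.card : ℝ) - (I.card : ℝ)) := by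
      rw [sum_split hIJ]
      have ha : ∑ v ∈ I, (if v ∈ I then μ v else 1) = (H:ℝ) := by
        rw [hH]; exact Finset.sum_congr rfl fun v hv => if_pos hv
      have hb2 : ∑ v ∈ J \ I, (if v ∈ I then μ v else 1) = ((J \ I).card : ℝ) := by
        rw [Finset.sum_congr rfl fun v hv => if_neg (Finset.mem_sdiff.mp hv).2]
        simp
      have hc2 : ((J \ I).card : ℝ) = (J.card : ℝ) - (I.card : ℝ) := by
        rw [Finset.card_sdiff_of_subset hIJ]
        exact_mod_cast Nat.cast_sub (Finset.card_le_card hIJ)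
      rw [ha, hb2, hc2]
    have h2 : ∑ v ∈ J, (if v = v₀ then ((I.card : ℝ) - 2 - (H:ℝ)) else 0)
        = (I.card : ℝ) - 2 - (H:ℝ) := by
      rw [Finset.sum_ite_eq' J v₀ (fun _ => ((I.card : ℝ) - 2 - (H:ℝ))), if_pos hv₀J]
    rw [h1, h2, hJcard]
    push_cast
    ring
  have hcpos : ∀ v ∈ J, 0 < c v := by
    intro v hv
    have h1 : 0 < (if v ∈ I then μ v else 1) := by
      by_cases h : v ∈ I
      · rw [if_pos h]; exact hμ0 _ h
      · rw [if_neg h]; exact one_pos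
    have h2 : 0 ≤ (if v = v₀ then ((I.card : ℝ) - 2 - (H:ℝ)) else 0) := by
      by_cases h : v = v₀
      · rw [if_pos h]; exact hpadR
      · rw [if_neg h]
    exact add_pos_of_pos_of_nonneg h1 h2
  set q : Fin n → ℝ := ∑ v ∈ J, c v • v with hq_def
  have hq_eq : q = ((∑ v ∈ I, μ v • v) + (∑ v ∈ J \ I, v))
      + ((I.card : ℝ) - 2 - (H:ℝ)) • v₀ := by
    rw [hq_def, hc_def]
    simp only [add_smul]
    rw [Finset.sum_add_distrib]
    congr 1
    · rw [sum_split hIJ]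
      congr 1
      · exact Finset.sum_congr rfl fun v hv => by rw [if_pos hv]
      · refine Finset.sum_congr rfl fun v hv => ?_
        rw [if_neg (Finset.mem_sdiff.mp hv).2, one_smul]
    · have hform : ∀ v ∈ J, (if v = v₀ then ((I.card : ℝ) - 2 - (H:ℝ)) else 0) • v
          = (if v = v₀ then ((I.card : ℝ) - 2 - (H:ℝ)) • v else 0) := by
        intro v _
        by_cases h : v = v₀ <;> simp [h]
      rw [Finset.sum_congr rfl hform,
        Finset.sum_ite_eq' J v₀ (fun v => ((I.card : ℝ) - 2 - (H:ℝ)) • v), if_pos hv₀J]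
  have hq_lat : q ∈ latticePts n := by
    rw [hq_eq]
    refine lat_add (lat_add hw ?_) ?_
    · refine lat_sum _ _ fun v hv => ?_
      exact hSlat (hJS (Finset.mem_coe.mpr (Finset.mem_sdiff.mp hv).1))
    · have hcast : ((I.card : ℝ) - 2 - (H:ℝ)) = (((I.card : ℤ) - 2 - H : ℤ) : ℝ) := by
        push_cast; ring
      rw [hcast]
      exact lat_zsmul (hSlat (hIS (Finset.mem_coe.mpr hv₀))) _
  -- now show q is in the interior of (n-1) • P
  set ω : ↥(J : Set (Fin n → ℝ)) → ℝ := fun v => c v / ((n:ℝ)-1) with hω_def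
  have hωsum : ∑ v : ↥(J : Set (Fin n → ℝ)), ω v = 1 := by
    have h1 : ∑ v : ↥(J : Set (Fin n → ℝ)), ω v = ∑ v ∈ J, c v / ((n:ℝ)-1) :=
      Finset.sum_coe_sort J (fun v => c v / ((n:ℝ)-1))
    rw [h1, ← Finset.sum_div, hcsum, div_self hn1.ne']
  set p : Fin n → ℝ := ((n:ℝ)-1)⁻¹ • q with hp_def
  have hp_comb : Finset.univ.affineCombination ℝ
      (fun v : ↥(J : Set (Fin n → ℝ)) => (v : Fin n → ℝ)) ω = p := by
    rw [Finset.affineCombination_eq_linear_combination _ _ _ hωsum]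
    have h1 : (∑ v : ↥(J : Set (Fin n → ℝ)), ω v • (v : Fin n → ℝ))
        = ∑ v ∈ J, (c v / ((n:ℝ)-1)) • v :=
      Finset.sum_coe_sort J (fun v => (c v / ((n:ℝ)-1)) • v)
    rw [h1, hp_def, hq_def, Finset.smul_sum]
    refine Finset.sum_congr rfl fun v _ => ?_
    rw [div_eq_inv_mul, mul_smul]
  have hp_int : p ∈ interior (convexHull ℝ (Set.range ⇑b)) := by
    rw [b.interior_convexHull]
    intro i
    have hcoord : b.coord i p = ω i := by
      rw [← hp_comb]
      exact b.coord_apply_combination_of_mem (Finset.mem_univ i) hωsum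
    rw [hcoord]
    exact div_pos (hcpos _ (Finset.mem_coe.mp i.2)) hn1
  have hPsub : convexHull ℝ (Set.range ⇑b) ⊆ convexHull ℝ (S : Set (Fin n → ℝ)) := by
    apply convexHull_mono
    have : Set.range ⇑b = (J : Set (Fin n → ℝ)) := Subtype.range_coe
    rw [this]
    exact hJS
  have hp_intP : p ∈ interior (convexHull ℝ (S : Set (Fin n → ℝ))) :=
    interior_mono hPsub hp_int
  have hcast : (((n - 1 : ℕ)) : ℝ) = (n:ℝ) - 1 := by
    have h1 : (1:ℕ) ≤ n := by omega
    rw [Nat.cast_sub h1, Nat.cast_one]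
  have hq_mem : q ∈ interior ((((n - 1 : ℕ)) : ℝ) • convexHull ℝ (S : Set (Fin n → ℝ))) := by
    rw [hcast, interior_smul₀ hn1.ne' _]
    refine ⟨p, hp_intP, ?_⟩
    show ((n:ℝ)-1) • p = q
    rw [hp_def, smul_smul, mul_inv_cancel₀ hn1.ne', one_smul]
  exact hk q hq_mem hq_lat

end NormalAux

/-- Special case `k = n - 1`, `ℓ = 1` of Corollary 1.4: if `P ⊆ ℝ^n` (`n ≥ 2`) is a
full-dimensional lattice polytope such that `(n-1)P` contains no lattice point in its
interior, then `P` itself is normal. -/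
theorem normal_of_no_interior_lattice_point_in_dilate
    (n : ℕ) (hn : 2 ≤ n)
    (S : Finset (Fin n → ℝ)) (hS : S.Nonempty)
    (hSlat : (S : Set (Fin n → ℝ)) ⊆ latticePts n)
    (P : Set (Fin n → ℝ)) (hP : P = convexHull ℝ (S : Set (Fin n → ℝ)))
    (hPfull : (interior P).Nonempty)
    (hk : ∀ x ∈ interior ((((n - 1 : ℕ)) : ℝ) • P), x ∉ latticePts n) :
    ∀ m : ℕ, 1 ≤ m →
      ∀ x ∈ ((m : ℝ) • P) ∩ latticePts n,
        ∃ f : Fin m → (Fin n → ℝ),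
          (∀ i, f i ∈ P ∩ latticePts n) ∧ x = ∑ i, f i := by
  classical
  subst hP
  intro m hm x hx
  obtain ⟨hxP, hxlat⟩ := hx
  have hspan : affineSpan ℝ (S : Set (Fin n → ℝ)) = ⊤ :=
    interior_convexHull_nonempty_iff_affineSpan_eq_top.mp hPfull
  obtain ⟨p, hpP, hpx⟩ := Set.mem_smul_set.mp hxP
  have hm0 : (0:ℝ) < (m:ℝ) := by
    have : 0 < m := hm
    exact_mod_cast this
  -- Caratheodory
  rw [convexHull_eq_union] at hpP
  simp only [Set.mem_iUnion] at hpP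
  obtain ⟨t, hts, hti, hpt⟩ := hpP
  rw [Finset.convexHull_eq] at hpt
  obtain ⟨w, hw0, hw1, hwp⟩ := hpt
  rw [Finset.centerMass_eq_of_sum_1 _ _ hw1] at hwp
  simp only [id] at hwp
  set lam : (Fin n → ℝ) → ℝ := fun v => (m:ℝ) * w v with hlam_def
  have hx_eq : x = ∑ v ∈ t, lam v • v := by
    rw [← hpx, ← hwp, Finset.smul_sum]
    exact Finset.sum_congr rfl fun v _ => by rw [hlam_def, smul_smul]
  have hlam0 : ∀ v ∈ t, 0 ≤ lam v := fun v hv => mul_nonneg hm0.le (hw0 v hv)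
  have hlamsum : ∑ v ∈ t, lam v = (m:ℝ) := by
    rw [hlam_def, ← Finset.mul_sum, hw1, mul_one]
  set I : Finset (Fin n → ℝ) := t.filter (fun v => Int.fract (lam v) ≠ 0) with hI_def
  set r : Fin n → ℝ := ∑ v ∈ t, Int.fract (lam v) • v with hr_def
  have hfract0 : ∀ v ∈ t, 0 ≤ Int.fract (lam v) := fun v _ => Int.fract_nonneg _
  have hr_eqI : r = ∑ v ∈ I, Int.fract (lam v) • v := by
    rw [hr_def, hI_def]
    refine (Finset.sum_filter_of_ne ?_).symm
    intro v hv hne hfr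
    exact hne (by rw [hfr, zero_smul])
  set G : ℤ := ∑ v ∈ t, ⌊lam v⌋ with hG_def
  set H : ℤ := (m:ℤ) - G with hH_def
  have hHfract : (H:ℝ) = ∑ v ∈ t, Int.fract (lam v) := by
    have h1 : ∑ v ∈ t, Int.fract (lam v) = ∑ v ∈ t, (lam v - (⌊lam v⌋:ℝ)) :=
      Finset.sum_congr rfl fun v _ => (Int.self_sub_floor _).symm
    rw [h1, Finset.sum_sub_distrib, hlamsum, hH_def, hG_def]
    push_cast
    ring
  have hHI : (H:ℝ) = ∑ v ∈ I, Int.fract (lam v) := by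
    rw [hHfract, hI_def]
    exact (Finset.sum_filter_of_ne fun v hv hne => hne).symm
  have hx_split : x = (∑ v ∈ t, (⌊lam v⌋:ℝ) • v) + r := by
    rw [hx_eq, hr_def, ← Finset.sum_add_distrib]
    refine Finset.sum_congr rfl fun v _ => ?_
    rw [← add_smul, Int.floor_add_fract]
  have hr_lat : r ∈ latticePts n := by
    have h1 : r = x - ∑ v ∈ t, (⌊lam v⌋:ℝ) • v := by rw [hx_split]; abel
    rw [h1]
    exact NormalAux.lat_sub hxlat (NormalAux.lat_sum _ _ fun v hv =>
      NormalAux.lat_zsmul (hSlat (hts (Finset.mem_coe.mpr hv))) _)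
  have hH0 : 0 ≤ H := by
    have h1 : (0:ℝ) ≤ (H:ℝ) := by
      rw [hHfract]; exact Finset.sum_nonneg hfract0
    exact_mod_cast h1
  obtain ⟨hH1, hr0, hrP⟩ : H ≤ 1 ∧ (H = 0 → r = 0) ∧
      (H = 1 → r ∈ convexHull ℝ (S : Set (Fin n → ℝ))) := by
    by_cases hIe : I.Nonempty
    · obtain ⟨v₀, hv₀⟩ := hIe
      have hfpos : ∀ v ∈ I, 0 < Int.fract (lam v) := fun v hv => by
        have h1 := (Finset.mem_filter.mp hv).2
        have h2 := hfract0 v (Finset.mem_filter.mp hv).1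
        exact lt_of_le_of_ne h2 (Ne.symm h1)
      have hflt1 : ∀ v ∈ I, Int.fract (lam v) < 1 := fun v _ => Int.fract_lt_one _
      have hItS : (I : Set (Fin n → ℝ)) ⊆ (S : Set (Fin n → ℝ)) := by
        intro y hy
        exact hts (Finset.mem_coe.mpr (Finset.filter_subset _ _ (Finset.mem_coe.mp hy)))
      have hIind : AffineIndependent ℝ
          (Subtype.val : ↥((I : Set (Fin n → ℝ))) → (Fin n → ℝ)) := by
        have hti' : AffineIndependent ℝ
            (Subtype.val : ↥((t : Set (Fin n → ℝ))) → (Fin n → ℝ)) := hti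
        exact hti'.mono (Finset.coe_subset.mpr (Finset.filter_subset _ _))
      have hHpos : 1 ≤ H := by
        have h1 : (0:ℝ) < (H:ℝ) := by
          rw [hHI]; exact Finset.sum_pos hfpos ⟨v₀, hv₀⟩
        have h2 : 0 < H := by exact_mod_cast h1
        omega
      have k1 : (I.card : ℤ) - 1 ≤ H := by
        refine NormalAux.key hn S hSlat hspan hk I v₀ hv₀ hItS hIind
          (fun v => Int.fract (lam v)) hfpos hflt1 ?_ H hHI
        rw [← hr_eqI]; exact hr_lat
      have k2 : (I.card : ℤ) - 1 ≤ (I.card : ℤ) - H := by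
        refine NormalAux.key hn S hSlat hspan hk I v₀ hv₀ hItS hIind
          (fun v => 1 - Int.fract (lam v))
          (fun v hv => by show 0 < 1 - Int.fract (lam v); linarith [hflt1 v hv])
          (fun v hv => by show 1 - Int.fract (lam v) < 1; linarith [hfpos v hv])
          ?_ ((I.card : ℤ) - H) ?_
        · have h1 : ∑ v ∈ I, (1 - Int.fract (lam v)) • v
              = (∑ v ∈ I, v) - ∑ v ∈ I, Int.fract (lam v) • v := by
            rw [← Finset.sum_sub_distrib]
            exact Finset.sum_congr rfl fun v _ => by rw [sub_smul, one_smul]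
          rw [h1, ← hr_eqI]
          exact NormalAux.lat_sub (NormalAux.lat_sum _ _ fun v hv => hSlat (hItS (Finset.mem_coe.mpr hv))) hr_lat
        · rw [Finset.sum_sub_distrib, Finset.sum_const, ← hHI]
          push_cast
          ring
      refine ⟨by omega, fun h0 => absurd h0 (by omega), fun h1 => ?_⟩
      have hsum1 : ∑ v ∈ t, Int.fract (lam v) = 1 := by
        rw [← hHfract, h1, Int.cast_one]
      have hmem := Finset.centerMass_mem_convexHull t hfract0
        (by rw [hsum1]; exact one_pos) (fun v hv => Finset.mem_coe.mpr hv)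
      rw [Finset.centerMass_eq_of_sum_1 _ _ hsum1] at hmem
      have hmem' : r ∈ convexHull ℝ (t : Set (Fin n → ℝ)) := by
        rw [hr_def]
        simpa using hmem
      exact convexHull_mono hts hmem'
    · have hIe' : I = ∅ := Finset.not_nonempty_iff_eq_empty.mp hIe
      have h0 : H = 0 := by
        have h1 : (H:ℝ) = 0 := by rw [hHI, hIe', Finset.sum_empty]
        exact_mod_cast h1
      exact ⟨by omega, fun _ => by rw [hr_eqI, hIe', Finset.sum_empty],
        fun h1 => absurd h1 (by omega)⟩
  -- assembling the decomposition
  have hfl0 : ∀ v ∈ t, 0 ≤ ⌊lam v⌋ := fun v hv => Int.floor_nonneg.mpr (hlam0 v hv)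
  set kk : (Fin n → ℝ) → ℕ := fun v => (⌊lam v⌋).toNat with hk_def
  have hkcast : ∀ v ∈ t, ((kk v : ℤ)) = ⌊lam v⌋ := fun v hv => Int.toNat_of_nonneg (hfl0 v hv)
  have hHtoNat : (H.toNat : ℤ) = H := Int.toNat_of_nonneg hH0
  have hcard_eq : ∑ v ∈ t, kk v + H.toNat = m := by
    have h1 : ((∑ v ∈ t, kk v : ℕ) : ℤ) + (H.toNat : ℤ) = (m:ℤ) := by
      rw [hHtoNat, Nat.cast_sum]
      rw [Finset.sum_congr rfl hkcast]
      rw [hH_def, hG_def]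
      ring
    exact_mod_cast h1
  set M : Multiset (Fin n → ℝ) :=
    (t.val.bind fun v => Multiset.replicate (kk v) v) + Multiset.replicate H.toNat r
    with hM_def
  have hMcard : Multiset.card M = m := by
    rw [hM_def, Multiset.card_add, Multiset.card_bind, Multiset.card_replicate]
    simp only [Function.comp, Multiset.card_replicate]
    exact hcard_eq
  have hHr : (H.toNat) • r = r := by
    rcases (by omega : H = 0 ∨ H = 1) with h | h
    · rw [hr0 h, h]; simp
    · rw [h]; simp
  have hMsum : M.sum = x := by
    rw [hM_def, Multiset.sum_add, Multiset.sum_bind, Multiset.sum_replicate, hHr]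
    have h1 : (Multiset.map (fun v => (Multiset.replicate (kk v) v).sum) t.val).sum
        = ∑ v ∈ t, (⌊lam v⌋:ℝ) • v := by
      have h2 : ∀ v ∈ t, (Multiset.replicate (kk v) v).sum = (⌊lam v⌋:ℝ) • v := by
        intro v hv
        rw [Multiset.sum_replicate, ← Nat.cast_smul_eq_nsmul ℝ]
        congr 1
        exact_mod_cast hkcast v hv
      exact Finset.sum_congr rfl h2
    rw [h1, ← hx_split]
  have hMmem : ∀ y ∈ M, y ∈ convexHull ℝ (S : Set (Fin n → ℝ)) ∩ latticePts n := by
    intro y hy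
    rw [hM_def] at hy
    rcases Multiset.mem_add.mp hy with h | h
    · obtain ⟨v, hv, hy'⟩ := Multiset.mem_bind.mp h
      have hy2 : y = v := (Multiset.mem_replicate.mp hy').2
      rw [hy2]
      have hvS : v ∈ (S : Set (Fin n → ℝ)) := hts (Finset.mem_coe.mpr hv)
      exact ⟨subset_convexHull ℝ _ hvS, hSlat hvS⟩
    · obtain ⟨hne, rfl⟩ := Multiset.mem_replicate.mp h
      have h1 : H = 1 := by omega
      exact ⟨hrP h1, hr_lat⟩
  set l : List (Fin n → ℝ) := M.toList with hl_def
  have hlen : l.length = m := by rw [hl_def, Multiset.length_toList, hMcard]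
  refine ⟨fun i => l.get (Fin.cast hlen.symm i), fun i => ?_, ?_⟩
  · exact hMmem _ (Multiset.mem_toList.mp (l.get_mem _))
  · have h1 : ∑ i : Fin m, l.get (Fin.cast hlen.symm i) = ∑ j : Fin l.length, l.get j :=
      Fintype.sum_equiv (finCongr hlen.symm) _ _ (fun i => rfl)
    rw [h1]
    have h2 : ∑ j : Fin l.length, l.get j = l.sum := by
      simpa [List.get_eq_getElem] using Fin.sum_univ_get l
    rw [h2, hl_def, Multiset.sum_toList, hMsum]
end
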